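/- arXiv:1607.03251 — 4 statements merged into one kernel-verified Lean document; each statement's English description precedes it below -/
import Mathlib

section
/- Fix n ≥ 2 and 1 ≤ j ≤ n. Then p^{(1)}_{n-1}(x_{j,n}) ≠ 0 and a_1² Σ_{i=1}^{n-1} λ^{(1)}_{i,n-1}/(x_{j,n} − y_{i,n-1})² = a_1 · p_n'(x_{j,n})/p^{(1)}_{n-1}(x_{j,n}) − 1. -/
open MeasureTheory Polynomial Finset

theorem stmt_14
    (μ : Measure ℝ) [IsProbabilityMeasure μ]
    (lo hi : ℝ)
    (hsupp : μ (Set.Icc lo hi)ᶜ = 0)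
    (hinf : ∀ s : Finset ℝ, μ (↑s : Set ℝ)ᶜ ≠ 0)
    (p : ℕ → Polynomial ℝ)
    (hdeg : ∀ m : ℕ, (p m).degree = m)
    (hlead : ∀ m : ℕ, 0 < (p m).leadingCoeff)
    (horth : ∀ m l : ℕ, ∫ t, (p m).eval t * (p l).eval t ∂μ = if m = l then 1 else 0)
    (a b : ℕ → ℝ)
    (hapos : ∀ m : ℕ, 1 ≤ m → 0 < a m)
    (hrec0 : Polynomial.X * p 0 = Polynomial.C (a 1) * p 1 + Polynomial.C (b 0) * p 0)
    (hrec : ∀ m : ℕ, Polynomial.X * p (m + 1) =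
      Polynomial.C (a (m + 2)) * p (m + 2) + Polynomial.C (b (m + 1)) * p (m + 1) +
        Polynomial.C (a (m + 1)) * p m)
    (x : ℕ → ℕ → ℝ)
    (hxroot : ∀ m j : ℕ, 1 ≤ j → j ≤ m → (p m).eval (x m j) = 0)
    (hxmono : ∀ m j : ℕ, 1 ≤ j → j + 1 ≤ m → x m j < x m (j + 1))
    (q : ℕ → Polynomial ℝ)
    (hq0 : q 0 = 1)
    (hqrec0 : Polynomial.X * q 0 = Polynomial.C (a 2) * q 1 + Polynomial.C (b 1) * q 0)
    (hqrec : ∀ m : ℕ, Polynomial.X * q (m + 1) =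
      Polynomial.C (a (m + 3)) * q (m + 2) + Polynomial.C (b (m + 2)) * q (m + 1) +
        Polynomial.C (a (m + 2)) * q m)
    (y : ℕ → ℕ → ℝ)
    (hyroot : ∀ m j : ℕ, 1 ≤ j → j ≤ m → (q m).eval (y m j) = 0)
    (hymono : ∀ m j : ℕ, 1 ≤ j → j + 1 ≤ m → y m j < y m (j + 1))
    (hxy : ∀ m j : ℕ, 1 ≤ j → j ≤ m → x (m + 1) j < y m j ∧ y m j < x (m + 1) (j + 1))
    (lam1 : ℕ → ℕ → ℝ)
    (hlam1 : ∀ m i : ℕ, 1 ≤ i → i ≤ m → lam1 m i =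
      (a (m + 1) * ((Polynomial.derivative (q m)).eval (y m i)) * ((q (m - 1)).eval (y m i)))⁻¹)
    (n : ℕ) (hn : 2 ≤ n) (j : ℕ) (hj1 : 1 ≤ j) (hj2 : j ≤ n) :
    (q (n - 1)).eval (x n j) ≠ 0 ∧
    a 1 ^ 2 * ∑ i ∈ Finset.Icc 1 (n - 1), lam1 (n - 1) i / (x n j - y (n - 1) i) ^ 2 =
      a 1 * ((Polynomial.derivative (p n)).eval (x n j)) / (q (n - 1)).eval (x n j) - 1 := by
  obtain ⟨M, rfl⟩ : ∃ M, n = M + 2 := ⟨n - 2, by omega⟩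
  clear hn
  set N : ℕ := M + 1 with hNdef
  have hsub : (M + 2) - 1 = N := rfl
  rw [hsub]
  have ha1 : (0:ℝ) < a 1 := hapos 1 le_rfl
  have ha1' : (a 1 : ℝ) ≠ 0 := ne_of_gt ha1
  have hCmul : ∀ (cc : ℝ) (f : Polynomial ℝ), (C cc * f).degree ≤ f.degree := by
    intro cc f
    rw [← smul_eq_C_mul]
    exact degree_smul_le cc f
  -- p 0 = 1
  have hp0 : p 0 = 1 := by
    have h0 : p 0 = C ((p 0).coeff 0) := eq_C_of_degree_le_zero (by rw [hdeg 0]; exact le_rfl)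
    have hpos : 0 < (p 0).coeff 0 := by
      have := hlead 0
      rwa [h0, leadingCoeff_C] at this
    have hint := horth 0 0
    rw [if_pos rfl, h0] at hint
    simp only [eval_C] at hint
    rw [integral_const] at hint
    simp only [measure_univ, ENNReal.toReal_one, probReal_univ, one_smul, smul_eq_mul] at hint
    have hc1 : (p 0).coeff 0 = 1 := by nlinarith
    rw [h0, hc1, map_one]
  -- degrees of q
  have hqdeg : ∀ m : ℕ, (q m).degree = m := by
    have key : ∀ m : ℕ, (q m).degree = m ∧ (q (m + 1)).degree = ((m + 1 : ℕ) : ℕ) := by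
      intro m
      induction m with
      | zero =>
        constructor
        · rw [hq0]; exact degree_one
        · have h1 : C (a 2) * q 1 = X - C (b 1) := by
            rw [hq0] at hqrec0
            linear_combination -hqrec0
          have h2 : (C (a 2) * q 1).degree = 1 := by rw [h1]; exact degree_X_sub_C _
          rw [degree_C_mul (ne_of_gt (hapos 2 (by omega)))] at h2
          exact_mod_cast h2
      | succ m ih =>
        refine ⟨ih.2, ?_⟩
        have h1 : C (a (m + 3)) * q (m + 2) =
            X * q (m + 1) - (C (b (m + 2)) * q (m + 1) + C (a (m + 2)) * q m) := by
          linear_combination -hqrec m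
        have hd1 : (X * q (m + 1)).degree = ((m + 2 : ℕ) : WithBot ℕ) := by
          rw [degree_mul, degree_X, ih.2]
          norm_cast
          omega
        have hd2 : (C (b (m + 2)) * q (m + 1) + C (a (m + 2)) * q m).degree <
            ((m + 2 : ℕ) : WithBot ℕ) := by
          have hCle : ∀ (cc : ℝ) (f : Polynomial ℝ), (C cc * f).degree ≤ f.degree := by
            intro cc f
            rw [← smul_eq_C_mul]
            exact degree_smul_le cc f
          apply lt_of_le_of_lt (degree_add_le _ _)
          apply max_lt
          · apply lt_of_le_of_lt (hCle _ _)
            rw [ih.2]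
            exact_mod_cast Nat.lt_succ_self (m + 1)
          · apply lt_of_le_of_lt (hCle _ _)
            rw [ih.1]
            exact_mod_cast by omega
        have h2 : (C (a (m + 3)) * q (m + 2)).degree = ((m + 2 : ℕ) : WithBot ℕ) := by
          rw [h1, degree_sub_eq_left_of_degree_lt (by rw [hd1]; exact hd2), hd1]
        rw [degree_C_mul (ne_of_gt (hapos (m + 3) (by omega)))] at h2
        exact_mod_cast h2
    exact fun m => (key m).1
  have hqne : ∀ m : ℕ, q m ≠ 0 := fun m h => by
    simpa [h] using hqdeg m
  have hqnat : ∀ m : ℕ, (q m).natDegree = m := fun m =>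
    natDegree_eq_of_degree_eq_some (hqdeg m)
  have hpnat : ∀ m : ℕ, (p m).natDegree = m := fun m =>
    natDegree_eq_of_degree_eq_some (hdeg m)
  have hpne : ∀ m : ℕ, p m ≠ 0 := fun m h => by
    simpa [h] using hdeg m
  -- leading coefficient relations
  have hcl : ∀ k : ℕ, (p k).coeff k = (p k).leadingCoeff := by
    intro k
    have := Polynomial.coeff_natDegree (p := p k)
    rwa [hpnat k] at this
  have hclq : ∀ k : ℕ, (q k).coeff k = (q k).leadingCoeff := by
    intro k
    have := Polynomial.coeff_natDegree (p := q k)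
    rwa [hqnat k] at this
  have hcz : ∀ k l : ℕ, k < l → (p k).coeff l = 0 := fun k l hkl =>
    coeff_eq_zero_of_degree_lt (by rw [hdeg k]; exact_mod_cast hkl)
  have hczq : ∀ k l : ℕ, k < l → (q k).coeff l = 0 := fun k l hkl =>
    coeff_eq_zero_of_degree_lt (by rw [hqdeg k]; exact_mod_cast hkl)
  have hgp : ∀ m : ℕ, (p m).leadingCoeff = a (m + 1) * (p (m + 1)).leadingCoeff := by
    intro m
    cases m with
    | zero =>
      have h := congrArg (fun f : Polynomial ℝ => f.coeff (0 + 1)) hrec0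
      simp only [coeff_X_mul, coeff_add, coeff_C_mul] at h
      rw [hcz 0 1 (by omega), hcl 0, hcl 1] at h
      linarith [h]
    | succ m =>
      have h := congrArg (fun f : Polynomial ℝ => f.coeff (m + 1 + 1)) (hrec m)
      simp only [coeff_X_mul, coeff_add, coeff_C_mul] at h
      rw [hcz (m + 1) (m + 1 + 1) (by omega), hcz m (m + 1 + 1) (by omega),
        hcl (m + 1)] at h
      have h2 : (p (m + 2)).coeff (m + 1 + 1) = (p (m + 2)).leadingCoeff := hcl (m + 2)
      rw [h2] at h
      linarith [h]
  have hgq : ∀ m : ℕ, (q m).leadingCoeff = a (m + 2) * (q (m + 1)).leadingCoeff := by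
    intro m
    cases m with
    | zero =>
      have h := congrArg (fun f : Polynomial ℝ => f.coeff (0 + 1)) hqrec0
      simp only [coeff_X_mul, coeff_add, coeff_C_mul] at h
      rw [hczq 0 1 (by omega), hclq 0, hclq 1] at h
      linarith [h]
    | succ m =>
      have h := congrArg (fun f : Polynomial ℝ => f.coeff (m + 1 + 1)) (hqrec m)
      simp only [coeff_X_mul, coeff_add, coeff_C_mul] at h
      rw [hczq (m + 1) (m + 1 + 1) (by omega), hczq m (m + 1 + 1) (by omega),
        hclq (m + 1)] at h
      have h2 : (q (m + 2)).coeff (m + 1 + 1) = (q (m + 2)).leadingCoeff := hclq (m + 2)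
      rw [h2] at h
      linarith [h]
  have hlcpq : ∀ m : ℕ, a 1 * (p (m + 1)).leadingCoeff = (q m).leadingCoeff := by
    intro m
    induction m with
    | zero =>
      have h := hgp 0
      rw [hp0] at h
      rw [hq0]
      simp only [leadingCoeff_one] at h ⊢
      linarith [h]
    | succ m ih =>
      have e1 := hgp (m + 1)
      have e2 := hgq m
      have ha : a (m + 2) ≠ 0 := ne_of_gt (hapos (m + 2) (by omega))
      apply mul_left_cancel₀ ha
      calc a (m + 2) * (a 1 * (p (m + 2)).leadingCoeff)
          = a 1 * (a (m + 2) * (p (m + 2)).leadingCoeff) := by ring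
        _ = a 1 * (p (m + 1)).leadingCoeff := by rw [← e1]
        _ = (q m).leadingCoeff := ih
        _ = a (m + 2) * (q (m + 1)).leadingCoeff := e2
  -- Wronskian
  have hW : ∀ m : ℕ, C (a (m + 2)) * (p (m + 2) * q m - p (m + 1) * q (m + 1)) = -C (a 1) := by
    intro m
    induction m with
    | zero =>
      have h1 := hrec 0
      have h2 := hqrec0
      rw [hp0] at h1
      rw [hq0] at h2 ⊢
      linear_combination p 1 * h2 - h1
    | succ m ih =>
      linear_combination p (m + 2) * hqrec m - q (m + 1) * hrec (m + 1) + ih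
  -- notation
  set Q : Polynomial ℝ := q N with hQdef
  have hQdeg : Q.degree = (N : ℕ) := hqdeg N
  have hQnat : Q.natDegree = N := hqnat N
  set gq : ℝ := Q.leadingCoeff with hgqdef
  have hgq0 : gq ≠ 0 := leadingCoeff_ne_zero.mpr (hqne N)
  set Xj : ℝ := x (M + 2) j with hXjdef
  -- ordering facts
  have hymono' : ∀ i k : ℕ, 1 ≤ i → i < k → k ≤ N → y N i < y N k := by
    intro i k h1
    induction k with
    | zero => omega
    | succ k ih =>
      intro h2 h3
      by_cases hik : i = k
      · subst hik
        exact hymono N i h1 h3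
      · exact lt_trans (ih (by omega) (by omega)) (hymono N k (by omega) h3)
  have hxmono' : ∀ i k : ℕ, 1 ≤ i → i ≤ k → k ≤ M + 2 → x (M + 2) i ≤ x (M + 2) k := by
    intro i k h1
    induction k with
    | zero => omega
    | succ k ih =>
      intro h2 h3
      by_cases hik : i = k + 1
      · subst hik; exact le_rfl
      · exact le_trans (ih (by omega) (by omega))
          (le_of_lt (hxmono (M + 2) k (by omega) h3))
  have hyinj : Set.InjOn (y N) ↑(Finset.Icc 1 N) := by
    intro i hi k hk hik
    simp only [Finset.coe_Icc, Set.mem_Icc] at hi hk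
    by_contra hne
    rcases lt_or_gt_of_ne hne with h | h
    · exact absurd hik (ne_of_lt (hymono' i k hi.1 h hk.2))
    · exact absurd hik.symm (ne_of_lt (hymono' k i hk.1 h hi.2))
  have hxyne : ∀ i ∈ Finset.Icc 1 N, Xj ≠ y N i := by
    intro i hi
    simp only [Finset.mem_Icc] at hi
    rcases le_or_gt j i with h | h
    · exact ne_of_lt (lt_of_le_of_lt (hxmono' j i hj1 h (by omega)) (hxy N i hi.1 hi.2).1)
    · exact ne_of_gt (lt_of_lt_of_le (hxy N i hi.1 hi.2).2 (hxmono' (i+1) j (by omega) h hj2))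
  -- Q(Xj) ≠ 0 and the Wronskian evaluations
  have hWx : a (M + 2) * ((p (M + 1)).eval Xj * Q.eval Xj) = a 1 := by
    have := congrArg (Polynomial.eval Xj) (hW M)
    simp only [eval_mul, eval_sub, eval_neg, eval_C] at this
    rw [hxroot (M + 2) j hj1 hj2] at this
    nlinarith [this]
  have hQx : Q.eval Xj ≠ 0 := by
    intro h
    rw [h] at hWx
    simp at hWx
    exact ha1' hWx.symm
  refine ⟨hQx, ?_⟩
  -- p_n(y_i) and q_{n-2}(y_i)
  have hWy : ∀ i ∈ Finset.Icc 1 N, a (M + 2) * ((p (M + 2)).eval (y N i) * (q M).eval (y N i)) = -(a 1) := by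
    intro i hi
    simp only [Finset.mem_Icc] at hi
    have := congrArg (Polynomial.eval (y N i)) (hW M)
    simp only [eval_mul, eval_sub, eval_neg, eval_C] at this
    rw [hyroot N i hi.1 hi.2] at this
    nlinarith [this]
  have hpny : ∀ i ∈ Finset.Icc 1 N, (p (M + 2)).eval (y N i) ≠ 0 := by
    intro i hi h
    have := hWy i hi
    rw [h] at this
    simp at this
    exact ha1' this
  -- product form of Q
  have himg : ((Finset.Icc 1 N).image (y N)).card = N := by
    rw [Finset.card_image_of_injOn hyinj, Nat.card_Icc]
    omega
  have hprod : Q = C gq * ∏ i ∈ Finset.Icc 1 N, (X - C (y N i)) := by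
    set P : Polynomial ℝ := ∏ i ∈ Finset.Icc 1 N, (X - C (y N i)) with hPdef
    have hPmonic : P.Monic := monic_prod_of_monic _ _ (fun i _ => monic_X_sub_C _)
    have hPnat : P.natDegree = N := by
      rw [hPdef, natDegree_prod _ _ (fun i _ => X_sub_C_ne_zero _)]
      simp only [natDegree_X_sub_C]
      rw [Finset.sum_const, smul_eq_mul, mul_one, Nat.card_Icc]
      omega
    have hPdeg : P.degree = (N : ℕ) := by
      rw [degree_eq_natDegree hPmonic.ne_zero, hPnat]
    have hCPdeg : (C gq * P).degree = ((N : ℕ) : WithBot ℕ) := by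
      rw [degree_C_mul hgq0, hPdeg]
    have hlcCP : (C gq * P).leadingCoeff = gq := by
      rw [leadingCoeff_mul, leadingCoeff_C, hPmonic.leadingCoeff, mul_one]
    set V : Polynomial ℝ := Q - C gq * P with hVdef
    have hVeval : ∀ z ∈ (Finset.Icc 1 N).image (y N), V.eval z = 0 := by
      intro z hz
      obtain ⟨i, hi, rfl⟩ := Finset.mem_image.mp hz
      simp only [hVdef, eval_sub, eval_mul, eval_C]
      rw [hyroot N i (Finset.mem_Icc.mp hi).1 (Finset.mem_Icc.mp hi).2]
      have : P.eval (y N i) = 0 := by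
        rw [hPdef, eval_prod]
        apply Finset.prod_eq_zero hi
        simp
      rw [this]
      ring
    by_cases hV0 : V = 0
    · rw [← sub_eq_zero]
      exact hV0
    · exfalso
      apply hV0
      apply eq_zero_of_natDegree_lt_card_of_eval_eq_zero' V _ hVeval
      rw [himg]
      have hdeglt : V.degree < ((N : ℕ) : WithBot ℕ) := by
        rw [hVdef]
        rw [← hQdeg]
        exact degree_sub_lt (by rw [hQdeg, hCPdeg]) (hqne N) (by rw [hlcCP])
      exact (natDegree_lt_iff_degree_lt hV0).mpr hdeglt
  -- the cofactors
  set s : ℕ → Polynomial ℝ := fun i => C gq * ∏ k ∈ (Finset.Icc 1 N).erase i, (X - C (y N k)) with hsdef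
  have hQfact : ∀ i ∈ Finset.Icc 1 N, Q = (X - C (y N i)) * s i := by
    intro i hi
    rw [hprod, hsdef]
    rw [← Finset.mul_prod_erase _ _ hi]
    ring
  have hsyy : ∀ i ∈ Finset.Icc 1 N, ∀ k ∈ Finset.Icc 1 N, k ≠ i → (s i).eval (y N k) = 0 := by
    intro i hi k hk hki
    simp only [hsdef, eval_mul, eval_prod, eval_sub, eval_X, eval_C]
    apply mul_eq_zero_of_right
    apply Finset.prod_eq_zero (Finset.mem_erase.mpr ⟨hki, hk⟩)
    ring
  have hsy : ∀ i ∈ Finset.Icc 1 N, (s i).eval (y N i) ≠ 0 := by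
    intro i hi
    simp only [hsdef, eval_mul, eval_prod, eval_sub, eval_X, eval_C]
    apply mul_ne_zero hgq0
    rw [Finset.prod_ne_zero_iff]
    intro k hk
    have hk' := Finset.mem_erase.mp hk
    exact sub_ne_zero_of_ne fun h => hk'.1 (hyinj hi hk'.2 h).symm
  have hQder : ∀ i ∈ Finset.Icc 1 N, derivative Q = s i + (X - C (y N i)) * derivative (s i) := by
    intro i hi
    rw [hQfact i hi]
    rw [derivative_mul]
    simp
  have hQ'y : ∀ i ∈ Finset.Icc 1 N, (derivative Q).eval (y N i) = (s i).eval (y N i) := by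
    intro i hi
    rw [hQder i hi]
    simp
  have hQ'yne : ∀ i ∈ Finset.Icc 1 N, (derivative Q).eval (y N i) ≠ 0 := by
    intro i hi
    rw [hQ'y i hi]; exact hsy i hi
  -- the main polynomial identity
  set α : ℝ := (a 1)⁻¹ with hαdef
  set c : ℕ → ℝ := fun i => (p (M + 2)).eval (y N i) / (derivative Q).eval (y N i) with hcdef
  have hα0 : α ≠ 0 := inv_ne_zero ha1'
  have hlcp : (p (M + 2)).leadingCoeff = α * gq := by
    have h : a 1 * (p (M + 2)).leadingCoeff = gq := hlcpq N
    rw [hαdef]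
    field_simp
    linarith [h]
  have hmain : ∃ d : ℝ, p (M + 2) = (C α * X + C d) * Q + ∑ i ∈ Finset.Icc 1 N, C (c i) * s i := by
    set r : Polynomial ℝ := p (M + 2) - C α * (X * Q) with hrdef
    have hXQdeg : (C α * (X * Q)).degree = ((M + 2 : ℕ) : WithBot ℕ) := by
      rw [degree_C_mul hα0, degree_mul, degree_X, hQdeg]
      norm_cast
      omega
    have hlcXQ : (C α * (X * Q)).leadingCoeff = α * gq := by
      rw [leadingCoeff_mul, leadingCoeff_mul, leadingCoeff_C, leadingCoeff_X, one_mul]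
    have hrdeg : r.degree < ((M + 2 : ℕ) : WithBot ℕ) := by
      have h := degree_sub_lt (p := p (M + 2)) (q := C α * (X * Q))
        (by rw [hdeg, hXQdeg]) (hpne _) (by rw [hlcp, hlcXQ])
      rw [hdeg] at h
      exact h
    refine ⟨r.coeff N / gq, ?_⟩
    set d : ℝ := r.coeff N / gq with hddef
    set D : Polynomial ℝ := r - C d * Q with hDdef
    have hDdeg : D.degree < ((N : ℕ) : WithBot ℕ) := by
      rw [Polynomial.degree_lt_iff_coeff_zero]
      intro m hm
      have hm' : N ≤ m := by exact_mod_cast hm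
      rw [hDdef, coeff_sub, coeff_C_mul]
      rcases eq_or_lt_of_le hm' with hNm | hNm
      · subst hNm
        have hQN : Q.coeff N = gq := hclq N
        rw [hQN, hddef]
        field_simp
        ring
      · have h1 : r.coeff m = 0 := by
          apply coeff_eq_zero_of_degree_lt
          apply lt_of_lt_of_le hrdeg
          exact_mod_cast by omega
        have h2 : Q.coeff m = 0 := hczq N m hNm
        rw [h1, h2]
        ring
    have hsidef : ∀ i ∈ Finset.Icc 1 N, (C (c i) * s i).degree < ((N : ℕ) : WithBot ℕ) := by
      intro i hi
      have hmon : (∏ k ∈ (Finset.Icc 1 N).erase i, (X - C (y N k))).Monic :=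
        monic_prod_of_monic _ _ (fun k _ => monic_X_sub_C _)
      have hnat : (∏ k ∈ (Finset.Icc 1 N).erase i, (X - C (y N k))).natDegree = N - 1 := by
        rw [natDegree_prod _ _ (fun k _ => X_sub_C_ne_zero _)]
        simp only [natDegree_X_sub_C]
        rw [Finset.sum_const, smul_eq_mul, mul_one, Finset.card_erase_of_mem hi, Nat.card_Icc]
        omega
      have hdegle : (C (c i) * s i).degree ≤ ((N - 1 : ℕ) : WithBot ℕ) := by
        apply le_trans (hCmul _ _)
        rw [hsdef]
        apply le_trans (hCmul _ _)
        rw [degree_eq_natDegree hmon.ne_zero, hnat]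
      apply lt_of_le_of_lt hdegle
      exact_mod_cast by omega
    have hE0 : D - ∑ i ∈ Finset.Icc 1 N, C (c i) * s i = 0 := by
      set E : Polynomial ℝ := D - ∑ i ∈ Finset.Icc 1 N, C (c i) * s i with hEdef
      by_cases hE : E = 0
      · exact hE
      · exfalso
        apply hE
        apply eq_zero_of_natDegree_lt_card_of_eval_eq_zero' E ((Finset.Icc 1 N).image (y N))
        · intro z hz
          obtain ⟨i, hi, rfl⟩ := Finset.mem_image.mp hz
          obtain ⟨hi1, hi2⟩ := Finset.mem_Icc.mp hi
          have hyz : Q.eval (y N i) = 0 := hyroot N i hi1 hi2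
          have hDev : D.eval (y N i) = (p (M + 2)).eval (y N i) := by
            rw [hDdef, hrdef]
            simp only [eval_sub, eval_mul, eval_C, eval_X]
            rw [hyz]
            ring
          have hSev : (∑ k ∈ Finset.Icc 1 N, C (c k) * s k).eval (y N i) =
              (p (M + 2)).eval (y N i) := by
            rw [eval_finset_sum]
            rw [Finset.sum_eq_single i]
            · simp only [eval_mul, eval_C]
              have h1 := hQ'y i hi
              have h2 := hsy i hi
              simp only [hcdef]
              rw [h1]
              field_simp
            · intro k hk hki
              simp only [eval_mul, eval_C]
              rw [hsyy k hk i hi (Ne.symm hki)]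
              ring
            · intro h
              exact absurd hi h
          rw [hEdef, eval_sub, hDev, hSev, sub_self]
        · rw [himg]
          have hdegE : E.degree < ((N : ℕ) : WithBot ℕ) := by
            apply lt_of_le_of_lt (degree_sub_le _ _)
            apply max_lt hDdeg
            apply lt_of_le_of_lt (degree_sum_le _ _)
            rw [Finset.sup_lt_iff (by exact_mod_cast WithBot.bot_lt_coe N)]
            exact hsidef
          exact (natDegree_lt_iff_degree_lt hE).mpr hdegE
    rw [hDdef, hrdef] at hE0
    linear_combination hE0
  obtain ⟨d, hmain⟩ := hmain
  -- final computation
  have hu : ∀ i ∈ Finset.Icc 1 N, Xj - y N i ≠ 0 := fun i hi => sub_ne_zero_of_ne (hxyne i hi)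
  have hsx : ∀ i ∈ Finset.Icc 1 N, (s i).eval Xj = Q.eval Xj / (Xj - y N i) := by
    intro i hi
    have h := congrArg (Polynomial.eval Xj) (hQfact i hi)
    simp only [eval_mul, eval_sub, eval_X, eval_C] at h
    rw [eq_div_iff (hu i hi)]
    linarith [h]
  have hs'x : ∀ i ∈ Finset.Icc 1 N, (derivative (s i)).eval Xj =
      (derivative Q).eval Xj / (Xj - y N i) - Q.eval Xj / (Xj - y N i) ^ 2 := by
    intro i hi
    have h := congrArg (Polynomial.eval Xj) (hQder i hi)
    simp only [eval_add, eval_mul, eval_sub, eval_X, eval_C] at h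
    have hu' := hu i hi
    have h2 := congrArg (Polynomial.eval Xj) (hQfact i hi)
    simp only [eval_mul, eval_sub, eval_X, eval_C] at h2
    rw [h, h2]
    field_simp
    ring
  have hpeval : (p (M + 2)).eval Xj = 0 := hxroot (M + 2) j hj1 hj2
  set S1 : ℝ := ∑ i ∈ Finset.Icc 1 N, c i / (Xj - y N i) with hS1def
  set S2 : ℝ := ∑ i ∈ Finset.Icc 1 N, c i / (Xj - y N i) ^ 2 with hS2def
  have ev0 : 0 = (α * Xj + d) * Q.eval Xj + Q.eval Xj * S1 := by
    have h := congrArg (Polynomial.eval Xj) hmain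
    rw [hpeval] at h
    simp only [eval_add, eval_mul, eval_C, eval_X, eval_finset_sum] at h
    have hsum : ∑ i ∈ Finset.Icc 1 N, (C (c i) * s i).eval Xj = Q.eval Xj * S1 := by
      rw [hS1def, Finset.mul_sum]
      apply Finset.sum_congr rfl
      intro i hi
      rw [eval_mul, eval_C, hsx i hi]
      ring
    simp only [eval_mul, eval_C] at hsum
    rw [hsum] at h
    exact h
  have hder : derivative (p (M + 2)) = C α * Q + (C α * X + C d) * derivative Q +
      ∑ i ∈ Finset.Icc 1 N, C (c i) * derivative (s i) := by
    rw [hmain]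
    simp only [derivative_add, derivative_mul, derivative_sum, derivative_C, derivative_X,
      zero_mul, mul_one, add_zero, zero_add]
  have ev1 : (derivative (p (M + 2))).eval Xj =
      α * Q.eval Xj + (α * Xj + d) * (derivative Q).eval Xj +
        ((derivative Q).eval Xj * S1 - Q.eval Xj * S2) := by
    have h := congrArg (Polynomial.eval Xj) hder
    simp only [eval_add, eval_mul, eval_C, eval_X, eval_finset_sum] at h
    have hsum : ∑ i ∈ Finset.Icc 1 N, c i * (derivative (s i)).eval Xj =
        (derivative Q).eval Xj * S1 - Q.eval Xj * S2 := by
      rw [hS1def, hS2def, Finset.mul_sum, Finset.mul_sum, ← Finset.sum_sub_distrib]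
      apply Finset.sum_congr rfl
      intro i hi
      rw [hs'x i hi]
      ring
    rw [← hsum]
    exact h
  have hS1eq : α * Xj + d = -S1 := by
    have h : ((α * Xj + d) + S1) * Q.eval Xj = 0 := by linear_combination -ev0
    rcases mul_eq_zero.mp h with h' | h'
    · linarith
    · exact absurd h' hQx
  have hP' : (derivative (p (M + 2))).eval Xj = α * Q.eval Xj - Q.eval Xj * S2 := by
    rw [ev1, hS1eq]
    ring
  -- rewrite the left-hand side
  have hlam : ∀ i ∈ Finset.Icc 1 N, a 1 ^ 2 * lam1 N i = -(a 1) * c i := by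
    intro i hi
    obtain ⟨hi1, hi2⟩ := Finset.mem_Icc.mp hi
    have hl := hlam1 N i hi1 hi2
    simp only [show N + 1 = M + 2 from rfl, show N - 1 = M from rfl] at hl
    rw [← hQdef] at hl
    have hw := hWy i hi
    have hDy := hQ'yne i hi
    have hPy := hpny i hi
    have hA : a (M + 2) ≠ 0 := ne_of_gt (hapos (M + 2) (by omega))
    have hZy : (q M).eval (y N i) ≠ 0 := by
      intro h
      rw [h] at hw
      simp at hw
      exact ha1' hw
    rw [hl]
    simp only [hcdef]
    field_simp
    linear_combination hw
  have hLHS : a 1 ^ 2 * ∑ i ∈ Finset.Icc 1 N, lam1 N i / (Xj - y N i) ^ 2 = -(a 1) * S2 := by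
    rw [hS2def, Finset.mul_sum, Finset.mul_sum]
    apply Finset.sum_congr rfl
    intro i hi
    have h := hlam i hi
    calc a 1 ^ 2 * (lam1 N i / (Xj - y N i) ^ 2)
        = (a 1 ^ 2 * lam1 N i) / (Xj - y N i) ^ 2 := by ring
      _ = (-(a 1) * c i) / (Xj - y N i) ^ 2 := by rw [h]
      _ = -(a 1) * (c i / (Xj - y N i) ^ 2) := by ring
  rw [hLHS, hP', hαdef]
  field_simp
  ring
end

section
/- Fix n ≥ 1 and 1 ≤ j ≤ n. Then the Christoffel number λ_{j,n} satisfies λ_{j,n} = p^{(1)}_{n-1}(x_{j,n})/(a_1 · p_n'(x_{j,n})). -/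
open MeasureTheory Polynomial Finset

theorem stmt_15
    (μ : Measure ℝ) [IsProbabilityMeasure μ]
    (lo hi : ℝ)
    (hsupp : μ (Set.Icc lo hi)ᶜ = 0)
    (hinf : ∀ s : Finset ℝ, μ (↑s : Set ℝ)ᶜ ≠ 0)
    (p : ℕ → Polynomial ℝ)
    (hdeg : ∀ m : ℕ, (p m).degree = m)
    (hlead : ∀ m : ℕ, 0 < (p m).leadingCoeff)
    (horth : ∀ m l : ℕ, ∫ t, (p m).eval t * (p l).eval t ∂μ = if m = l then 1 else 0)
    (a b : ℕ → ℝ)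
    (hapos : ∀ m : ℕ, 1 ≤ m → 0 < a m)
    (hrec0 : Polynomial.X * p 0 = Polynomial.C (a 1) * p 1 + Polynomial.C (b 0) * p 0)
    (hrec : ∀ m : ℕ, Polynomial.X * p (m + 1) =
      Polynomial.C (a (m + 2)) * p (m + 2) + Polynomial.C (b (m + 1)) * p (m + 1) +
        Polynomial.C (a (m + 1)) * p m)
    (x : ℕ → ℕ → ℝ)
    (hxroot : ∀ m j : ℕ, 1 ≤ j → j ≤ m → (p m).eval (x m j) = 0)
    (hxmono : ∀ m j : ℕ, 1 ≤ j → j + 1 ≤ m → x m j < x m (j + 1))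
    (lam : ℕ → ℕ → ℝ)
    (hlam : ∀ m j : ℕ, lam m j = (∑ i ∈ Finset.range m, ((p i).eval (x m j)) ^ 2)⁻¹)
    (q : ℕ → Polynomial ℝ)
    (hq0 : q 0 = 1)
    (hqrec0 : Polynomial.X * q 0 = Polynomial.C (a 2) * q 1 + Polynomial.C (b 1) * q 0)
    (hqrec : ∀ m : ℕ, Polynomial.X * q (m + 1) =
      Polynomial.C (a (m + 3)) * q (m + 2) + Polynomial.C (b (m + 2)) * q (m + 1) +
        Polynomial.C (a (m + 2)) * q m)
    (n : ℕ) (hn : 1 ≤ n) (j : ℕ) (hj1 : 1 ≤ j) (hj2 : j ≤ n) :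
    lam n j = (q (n - 1)).eval (x n j) / (a 1 * (Polynomial.derivative (p n)).eval (x n j)) := by
  -- p 0 = 1
  have hp0 : p 0 = 1 := by
    have hc : p 0 = C ((p 0).coeff 0) :=
      Polynomial.eq_C_of_degree_le_zero (by rw [hdeg 0]; exact le_rfl)
    set c := (p 0).coeff 0 with hcdef
    have hcpos : 0 < c := by
      have h := hlead 0
      rwa [hc, leadingCoeff_C] at h
    have h00 := horth 0 0
    rw [hc] at h00
    simp [Polynomial.eval_C] at h00
    have hc1 : c = 1 := by nlinarith
    rw [hc, hc1, map_one]
  -- shifted associated sequence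
  set Q : ℕ → Polynomial ℝ := fun m => Nat.rec 0 (fun k _ => q k) m with hQdef
  have hQ0 : Q 0 = 0 := rfl
  have hQs : ∀ k, Q (k + 1) = q k := fun k => rfl
  have hQrec : ∀ m : ℕ, Polynomial.X * Q (m + 1) =
      Polynomial.C (a (m + 2)) * Q (m + 2) + Polynomial.C (b (m + 1)) * Q (m + 1) +
        Polynomial.C (a (m + 1)) * Q m := by
    intro m
    cases m with
    | zero => simpa [hQ0, hQs] using hqrec0
    | succ k => simpa [hQs] using hqrec k
  -- Wronskian identity
  have hW : ∀ m : ℕ, C (a (m + 1)) * (p (m + 1) * Q m - p m * Q (m + 1)) = -C (a 1) := by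
    intro m
    induction m with
    | zero =>
      have hQ1 : Q 1 = 1 := hq0
      simp [hQ0, hQ1, hp0]
    | succ k ih =>
      linear_combination p (k + 1) * hQrec k - Q (k + 1) * hrec k + ih
  -- confluent Christoffel–Darboux
  have hCD : ∀ m : ℕ, C (a (m + 1)) *
      (derivative (p (m + 1)) * p m - derivative (p m) * p (m + 1)) =
      ∑ i ∈ Finset.range (m + 1), p i ^ 2 := by
    intro m
    induction m with
    | zero =>
      have hd0 : (1 : Polynomial ℝ) = C (a 1) * derivative (p 1) := by
        have h := congrArg derivative hrec0
        simpa [hp0, derivative_mul] using h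
      simp only [Finset.sum_range_one, hp0, derivative_one, zero_mul, mul_zero,
        sub_zero, mul_one, one_pow, zero_add]
      linear_combination -hd0
    | succ k ih =>
      have hd : p (k + 1) + X * derivative (p (k + 1)) =
          C (a (k + 2)) * derivative (p (k + 2)) + C (b (k + 1)) * derivative (p (k + 1)) +
            C (a (k + 1)) * derivative (p k) := by
        have h := congrArg derivative (hrec k)
        simpa [derivative_mul] using h
      rw [Finset.sum_range_succ]
      linear_combination derivative (p (k + 1)) * hrec k - p (k + 1) * hd + ih
  obtain ⟨k, rfl⟩ : ∃ k, n = k + 1 := ⟨n - 1, (Nat.succ_pred_eq_of_pos hn).symm⟩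
  set x₀ := x (k + 1) j with hx₀
  have hroot : (p (k + 1)).eval x₀ = 0 := hxroot (k + 1) j hj1 hj2
  -- evaluate CD at x₀
  have hCDe : a (k + 1) * ((derivative (p (k + 1))).eval x₀ * (p k).eval x₀) =
      ∑ i ∈ Finset.range (k + 1), ((p i).eval x₀) ^ 2 := by
    have h := congrArg (Polynomial.eval x₀) (hCD k)
    simpa [hroot, Polynomial.eval_finset_sum] using h
  -- evaluate Wronskian at x₀
  have hWe : a (k + 1) * ((p k).eval x₀ * (q k).eval x₀) = a 1 := by
    have h := congrArg (Polynomial.eval x₀) (hW k)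
    rw [hQs] at h
    simp [hroot] at h
    linarith
  -- positivity of the sum
  have hS : 0 < ∑ i ∈ Finset.range (k + 1), ((p i).eval x₀) ^ 2 := by
    have h0 : (1 : ℝ) ≤ ∑ i ∈ Finset.range (k + 1), ((p i).eval x₀) ^ 2 := by
      have := Finset.single_le_sum (f := fun i => ((p i).eval x₀) ^ 2)
        (fun i _ => sq_nonneg _) (Finset.mem_range.mpr (Nat.succ_pos k))
      simpa [hp0] using this
    linarith
  have ha1 : (0 : ℝ) < a 1 := hapos 1 le_rfl
  have hPk : (p k).eval x₀ ≠ 0 := by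
    intro h
    rw [h] at hCDe
    simp at hCDe
    rw [← hCDe] at hS
    exact lt_irrefl _ hS
  have hD : (derivative (p (k + 1))).eval x₀ ≠ 0 := by
    intro h
    rw [h] at hCDe
    simp at hCDe
    rw [← hCDe] at hS
    exact lt_irrefl _ hS
  have hak : a (k + 1) ≠ 0 := (hapos (k + 1) (Nat.le_add_left 1 k)).ne'
  rw [hlam]
  have hsimp : (k + 1 - 1 : ℕ) = k := rfl
  rw [hsimp, ← hx₀, ← hCDe]
  have hq : (q k).eval x₀ = a 1 / (a (k + 1) * (p k).eval x₀) := by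
    field_simp
    linarith [hWe]
  rw [hq]
  field_simp
end

section
/- Fix integers n ≥ 2, 2 ≤ k ≤ n, and 1 ≤ j ≤ n, and assume p_{k-1}(x_{j,n}) ≠ 0. Then a_k² Σ_{i=1}^{k-1} λ_{i,k-1} p_k(x_{i,k-1})²/(x_{i,k-1} − x_{j,n})² = (Σ_{i=0}^{k-2} p_i(x_{j,n})²) / p_{k-1}(x_{j,n})². -/
open MeasureTheory Polynomial Finset

theorem stmt_18
    (μ : Measure ℝ) [IsProbabilityMeasure μ]
    (lo hi : ℝ)
    (hsupp : μ (Set.Icc lo hi)ᶜ = 0)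
    (hinf : ∀ s : Finset ℝ, μ (↑s : Set ℝ)ᶜ ≠ 0)
    (p : ℕ → Polynomial ℝ)
    (hdeg : ∀ m : ℕ, (p m).degree = m)
    (hlead : ∀ m : ℕ, 0 < (p m).leadingCoeff)
    (horth : ∀ m l : ℕ, ∫ t, (p m).eval t * (p l).eval t ∂μ = if m = l then 1 else 0)
    (a b : ℕ → ℝ)
    (hapos : ∀ m : ℕ, 1 ≤ m → 0 < a m)
    (hrec0 : Polynomial.X * p 0 = Polynomial.C (a 1) * p 1 + Polynomial.C (b 0) * p 0)
    (hrec : ∀ m : ℕ, Polynomial.X * p (m + 1) =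
      Polynomial.C (a (m + 2)) * p (m + 2) + Polynomial.C (b (m + 1)) * p (m + 1) +
        Polynomial.C (a (m + 1)) * p m)
    (x : ℕ → ℕ → ℝ)
    (hxroot : ∀ m j : ℕ, 1 ≤ j → j ≤ m → (p m).eval (x m j) = 0)
    (hxmono : ∀ m j : ℕ, 1 ≤ j → j + 1 ≤ m → x m j < x m (j + 1))
    (lam : ℕ → ℕ → ℝ)
    (hlam : ∀ m j : ℕ, lam m j = (∑ i ∈ Finset.range m, ((p i).eval (x m j)) ^ 2)⁻¹)
    (n k : ℕ) (hn : 2 ≤ n) (hk1 : 2 ≤ k) (hk2 : k ≤ n)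
    (j : ℕ) (hj1 : 1 ≤ j) (hj2 : j ≤ n)
    (hpk : (p (k - 1)).eval (x n j) ≠ 0) :
    a k ^ 2 * ∑ i ∈ Finset.Icc 1 (k - 1),
        lam (k - 1) i * ((p k).eval (x (k - 1) i)) ^ 2 / (x (k - 1) i - x n j) ^ 2 =
      (∑ i ∈ Finset.range (k - 1), ((p i).eval (x n j)) ^ 2) /
        ((p (k - 1)).eval (x n j)) ^ 2 := by
  classical
  -- evaluated recurrences
  have heval0 : ∀ u : ℝ, u * (p 0).eval u = a 1 * (p 1).eval u + b 0 * (p 0).eval u := by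
    intro u
    have h := congrArg (Polynomial.eval u) hrec0
    simpa using h
  have heval : ∀ m : ℕ, ∀ u : ℝ, u * (p (m+1)).eval u
      = a (m+2) * (p (m+2)).eval u + b (m+1) * (p (m+1)).eval u + a (m+1) * (p m).eval u := by
    intro m u
    have h := congrArg (Polynomial.eval u) (hrec m)
    simpa using h
  -- Christoffel–Darboux
  have cd : ∀ m : ℕ, ∀ u v : ℝ,
      (u - v) * ∑ r ∈ Finset.range (m+1), (p r).eval u * (p r).eval v
        = a (m+1) * ((p (m+1)).eval u * (p m).eval v - (p m).eval u * (p (m+1)).eval v) := by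
    intro m
    induction m with
    | zero =>
      intro u v
      rw [zero_add, Finset.sum_range_one]
      linear_combination (p 0).eval v * heval0 u - (p 0).eval u * heval0 v
    | succ m ih =>
      intro u v
      rw [Finset.sum_range_succ, mul_add, ih u v]
      linear_combination (p (m+1)).eval v * heval m u - (p (m+1)).eval u * heval m v
  obtain ⟨K, rfl⟩ : ∃ K, k = K + 2 := ⟨k - 2, by omega⟩
  set t : ℝ := x n j with ht
  set P : ℝ := (p (K+1)).eval t with hPdef
  have hPne : P ≠ 0 := hpk
  set Y : Fin (K+1) → ℝ := fun i => x (K+1) (1 + (i:ℕ)) with hYdef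
  have hroot : ∀ i : Fin (K+1), (p (K+1)).eval (Y i) = 0 := by
    intro i
    exact hxroot (K+1) (1 + (i:ℕ)) (by omega) (by have := i.isLt; omega)
  -- distinct nodes
  have hchain : ∀ dd c : ℕ, 1 ≤ c → c < dd → dd ≤ K+1 → x (K+1) c < x (K+1) dd := by
    intro dd
    induction dd with
    | zero => intro c h1 h2 h3; omega
    | succ dd ih =>
      intro c h1 h2 h3
      rcases Nat.lt_succ_iff_lt_or_eq.mp h2 with h | h
      · exact lt_trans (ih c h1 h (by omega)) (hxmono (K+1) dd (by omega) h3)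
      · subst h; exact hxmono (K+1) c h1 h3
  have hYne : ∀ i i' : Fin (K+1), i ≠ i' → Y i ≠ Y i' := by
    intro i i' hne
    have hne' : (i : ℕ) ≠ (i' : ℕ) := fun h => hne (Fin.ext h)
    rcases lt_or_gt_of_ne hne' with h | h
    · exact ne_of_lt (hchain (1 + (i':ℕ)) (1 + (i:ℕ)) (by omega) (by omega)
        (by have := i'.isLt; omega))
    · exact (ne_of_lt (hchain (1 + (i:ℕ)) (1 + (i':ℕ)) (by omega) (by omega)
        (by have := i.isLt; omega))).symm
  -- positivity of the diagonal
  have hp0 : ∀ u : ℝ, 0 < (p 0).eval u := by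
    intro u
    have hnd : (p 0).natDegree = 0 := Polynomial.natDegree_eq_of_degree_eq_some (hdeg 0)
    have h0 : p 0 = Polynomial.C ((p 0).coeff 0) :=
      Polynomial.eq_C_of_degree_le_zero (le_of_eq (hdeg 0))
    have hl := hlead 0
    rw [Polynomial.leadingCoeff, hnd] at hl
    rw [h0]; simpa using hl
  set d : Fin (K+1) → ℝ := fun i => ∑ r ∈ Finset.range (K+1), ((p r).eval (Y i)) ^ 2 with hddef
  have hdpos : ∀ i, 0 < d i := by
    intro i
    refine Finset.sum_pos' (fun r _ => sq_nonneg _) ⟨0, Finset.mem_range.mpr (by omega), ?_⟩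
    exact pow_pos (hp0 (Y i)) 2
  have hdne : ∀ i, d i ≠ 0 := fun i => (hdpos i).ne'
  -- the kernel matrix
  set A : Matrix (Fin (K+1)) (Fin (K+1)) ℝ :=
    Matrix.of (fun i r => (p (r:ℕ)).eval (Y i)) with hAdef
  have hAAT : A * A.transpose = Matrix.diagonal d := by
    ext i i'
    rw [Matrix.mul_apply]
    simp only [hAdef, Matrix.transpose_apply, Matrix.of_apply]
    by_cases h : i = i'
    · subst h
      rw [Matrix.diagonal_apply_eq,
        Fin.sum_univ_eq_sum_range (fun r => (p r).eval (Y i) * (p r).eval (Y i))]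
      simp [hddef, sq]
    · rw [Matrix.diagonal_apply_ne _ h]
      have hc := cd K (Y i) (Y i')
      rw [hroot i, hroot i'] at hc
      have hne : Y i - Y i' ≠ 0 := sub_ne_zero.mpr (hYne i i' h)
      have hz : ∑ r ∈ Finset.range (K+1), (p r).eval (Y i) * (p r).eval (Y i') = 0 := by
        have h0 : (Y i - Y i') * (∑ r ∈ Finset.range (K+1), (p r).eval (Y i) * (p r).eval (Y i')) = 0 := by
          rw [hc]; ring
        exact (mul_eq_zero.mp h0).resolve_left hne
      rw [Fin.sum_univ_eq_sum_range (fun r => (p r).eval (Y i) * (p r).eval (Y i'))]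
      exact hz
  -- column orthogonality
  have h1 : A * (A.transpose * Matrix.diagonal (fun i => (d i)⁻¹)) = 1 := by
    rw [← Matrix.mul_assoc, hAAT, Matrix.diagonal_mul_diagonal]
    have he : (fun i => d i * (d i)⁻¹) = fun _ : Fin (K+1) => (1:ℝ) :=
      funext fun i => mul_inv_cancel₀ (hdne i)
    rw [he, Matrix.diagonal_one]
  have h2 : (A.transpose * Matrix.diagonal (fun i => (d i)⁻¹)) * A = 1 :=
    mul_eq_one_comm.mp h1
  have horthd : ∀ r s : Fin (K+1),
      (∑ i : Fin (K+1), A i r * (d i)⁻¹ * A i s) = if r = s then 1 else 0 := by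
    intro r s
    have h3 := congrFun (congrFun h2 r) s
    rw [Matrix.mul_apply] at h3
    simp only [Matrix.mul_diagonal, Matrix.transpose_apply] at h3
    rw [Matrix.one_apply] at h3
    exact h3
  -- key per-node identity
  set c : Fin (K+1) → ℝ := fun r => (p (r:ℕ)).eval t with hcdef
  set S : Fin (K+1) → ℝ := fun i => ∑ r ∈ Finset.range (K+1), (p r).eval (Y i) * (p r).eval t
    with hSdef
  have hS : ∀ i : Fin (K+1), (Y i - t) * S i = a (K+2) * (p (K+2)).eval (Y i) * P := by
    intro i
    have hc := cd K (Y i) t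
    have hr := heval K (Y i)
    rw [hroot i] at hc hr
    rw [← hPdef] at hc
    simp only [hSdef]
    linear_combination hc + P * hr
  have hYt : ∀ i : Fin (K+1), Y i - t ≠ 0 := by
    intro i h
    apply hPne
    have h' : Y i = t := sub_eq_zero.mp h
    rw [hPdef, ← h']
    exact hroot i
  have hterm : ∀ i : Fin (K+1),
      a (K+2) ^ 2 * ((d i)⁻¹ * ((p (K+2)).eval (Y i)) ^ 2 / (Y i - t) ^ 2)
        = (d i)⁻¹ * (S i) ^ 2 / P ^ 2 := by
    intro i
    have hsq : a (K+2)^2 * ((p (K+2)).eval (Y i))^2 * P^2 = (Y i - t)^2 * (S i)^2 := by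
      linear_combination (-((Y i - t) * S i + a (K+2) * (p (K+2)).eval (Y i) * P)) * hS i
    rw [mul_div_assoc', div_eq_div_iff (pow_ne_zero 2 (hYt i)) (pow_ne_zero 2 hPne)]
    linear_combination (d i)⁻¹ * hsq
  -- the orthogonality sum
  have hsum : ∑ i : Fin (K+1), (d i)⁻¹ * (S i) ^ 2
      = ∑ r ∈ Finset.range (K+1), ((p r).eval t) ^ 2 := by
    have hSA : ∀ i, S i = ∑ r : Fin (K+1), A i r * c r := by
      intro i
      simp only [hSdef]
      rw [← Fin.sum_univ_eq_sum_range (fun r => (p r).eval (Y i) * (p r).eval t)]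
      rfl
    calc ∑ i : Fin (K+1), (d i)⁻¹ * (S i)^2
        = ∑ i : Fin (K+1), ∑ r : Fin (K+1), ∑ s : Fin (K+1),
            c r * c s * (A i r * (d i)⁻¹ * A i s) := by
          refine Finset.sum_congr rfl fun i _ => ?_
          rw [hSA i, sq, Finset.sum_mul_sum, Finset.mul_sum]
          refine Finset.sum_congr rfl fun r _ => ?_
          rw [Finset.mul_sum]
          exact Finset.sum_congr rfl fun s _ => by ring
      _ = ∑ r : Fin (K+1), ∑ s : Fin (K+1), c r * c s *
            ∑ i : Fin (K+1), A i r * (d i)⁻¹ * A i s := by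
          rw [Finset.sum_comm]
          refine Finset.sum_congr rfl fun r _ => ?_
          rw [Finset.sum_comm]
          refine Finset.sum_congr rfl fun s _ => ?_
          rw [Finset.mul_sum]
      _ = ∑ r : Fin (K+1), c r ^ 2 := by
          refine Finset.sum_congr rfl fun r _ => ?_
          simp only [horthd]
          simp [Finset.sum_ite_eq, sq, mul_ite]
      _ = ∑ r ∈ Finset.range (K+1), ((p r).eval t) ^ 2 := by
          rw [← Fin.sum_univ_eq_sum_range (fun r => ((p r).eval t)^2)]
  -- assemble
  show a (K+2) ^ 2 * ∑ i ∈ Finset.Icc 1 (K+1),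
        lam (K+1) i * ((p (K+2)).eval (x (K+1) i)) ^ 2 / (x (K+1) i - t) ^ 2
      = (∑ i ∈ Finset.range (K+1), ((p i).eval t) ^ 2) / P ^ 2
  rw [show Finset.Icc 1 (K+1) = Finset.Ico 1 (K+2) by rw [← Finset.Ico_add_one_right_eq_Icc]; rfl,
    Finset.sum_Ico_eq_sum_range]
  simp only [show K + 2 - 1 = K + 1 by omega]
  rw [← Fin.sum_univ_eq_sum_range (fun i =>
    lam (K+1) (1+i) * ((p (K+2)).eval (x (K+1) (1+i))) ^ 2 / (x (K+1) (1+i) - t) ^ 2)]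
  rw [Finset.mul_sum]
  have hfin : ∀ i : Fin (K+1),
      a (K+2) ^ 2 * (lam (K+1) (1+(i:ℕ)) * ((p (K+2)).eval (x (K+1) (1+(i:ℕ)))) ^ 2
        / (x (K+1) (1+(i:ℕ)) - t) ^ 2)
      = (d i)⁻¹ * (S i) ^ 2 / P ^ 2 := by
    intro i
    have hl : lam (K+1) (1+(i:ℕ)) = (d i)⁻¹ := by
      rw [hlam]
    rw [hl]
    exact hterm i
  rw [Finset.sum_congr rfl (fun i _ => hfin i), ← Finset.sum_div, hsum]
end

section
/- Fix integers n ≥ 2, 1 ≤ k ≤ n−1, and 1 ≤ j ≤ n, and assume p_{k-1}(x_{j,n}) ≠ 0. Then p^{(1)}_{n-1}(x_{j,n}) ≠ 0 and a_k² Σ_{i=k}^{n-1} λ^{(k)}_{i,n-k}/(x_{j,n} − y_{i,n-k})² = (1/p_{k-1}(x_{j,n})²) · ( a_1 · p_n'(x_{j,n})/p^{(1)}_{n-1}(x_{j,n}) − Σ_{i=0}^{k-1} p_i(x_{j,n})² ). -/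
open MeasureTheory Polynomial Finset

section Gen
variable (A B : ℕ → ℝ) (u w : ℕ → Polynomial ℝ)

-- Wronskian-type identity
theorem genOmega (hu0 : u 0 = 1) (hw0 : w 0 = 0) (hw1 : w 1 = 1)
    (hu : ∀ m, X * u (m+1) = C (A (m+2)) * u (m+2) + C (B (m+1)) * u (m+1) + C (A (m+1)) * u m)
    (hw : ∀ m, X * w (m+1) = C (A (m+2)) * w (m+2) + C (B (m+1)) * w (m+1) + C (A (m+1)) * w m) :
    ∀ m, C (A (m+1)) * (u m * w (m+1) - u (m+1) * w m) = C (A 1) := by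
  intro m
  induction m with
  | zero => rw [hu0, hw0, hw1]; ring
  | succ m ih => linear_combination ih - u (m+1) * hw m + w (m+1) * hu m

end Gen

section Gen2
variable (A B : ℕ → ℝ) (u w : ℕ → Polynomial ℝ)

-- confluent Christoffel-Darboux for u
theorem genU (hu0 : u 0 = 1)
    (hu0rec : X * u 0 = C (A 1) * u 1 + C (B 0) * u 0)
    (hu : ∀ m, X * u (m+1) = C (A (m+2)) * u (m+2) + C (B (m+1)) * u (m+1) + C (A (m+1)) * u m) :
    ∀ M, ∑ m ∈ range (M+1), (u m)^2 =
      C (A (M+1)) * (derivative (u (M+1)) * u M - derivative (u M) * u (M+1)) := by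
  intro M
  induction M with
  | zero =>
    have h := congrArg derivative hu0rec
    rw [hu0] at h
    simp only [derivative_add, derivative_mul, derivative_X, derivative_C, derivative_one,
      one_mul, mul_one, zero_mul, mul_zero, zero_add, add_zero] at h
    simp only [zero_add, range_one, sum_singleton, hu0, derivative_one, one_pow, mul_one,
      zero_mul, sub_zero]
    exact h
  | succ M ih =>
    have h := congrArg derivative (hu M)
    simp only [derivative_add, derivative_mul, derivative_X, derivative_C,
      one_mul, zero_mul, zero_add, add_zero] at h
    rw [Finset.sum_range_succ]
    linear_combination ih + u (M+1) * h - derivative (u (M+1)) * hu M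

theorem genV (hw0 : w 0 = 0) (hw1 : w 1 = 1)
    (hw : ∀ m, X * w (m+1) = C (A (m+2)) * w (m+2) + C (B (m+1)) * w (m+1) + C (A (m+1)) * w m) :
    ∀ M, ∑ m ∈ range (M+1), (w m)^2 =
      C (A (M+1)) * (derivative (w (M+1)) * w M - derivative (w M) * w (M+1)) := by
  intro M
  induction M with
  | zero => simp [hw0, hw1]
  | succ M ih =>
    have h := congrArg derivative (hw M)
    simp only [derivative_add, derivative_mul, derivative_X, derivative_C,
      one_mul, zero_mul, zero_add, add_zero] at h
    rw [Finset.sum_range_succ]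
    linear_combination ih + w (M+1) * h - derivative (w (M+1)) * hw M

theorem genB (hu0 : u 0 = 1) (hw0 : w 0 = 0) (hw1 : w 1 = 1)
    (hu : ∀ m, X * u (m+1) = C (A (m+2)) * u (m+2) + C (B (m+1)) * u (m+1) + C (A (m+1)) * u m)
    (hw : ∀ m, X * w (m+1) = C (A (m+2)) * w (m+2) + C (B (m+1)) * w (m+1) + C (A (m+1)) * w m) :
    ∀ M, ∑ m ∈ range (M+1), u m * w m =
      C (A (M+1)) * (derivative (u (M+1)) * w M - derivative (u M) * w (M+1)) := by
  intro M
  induction M with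
  | zero => simp [hu0, hw0, hw1]
  | succ M ih =>
    have h := congrArg derivative (hu M)
    simp only [derivative_add, derivative_mul, derivative_X, derivative_C,
      one_mul, zero_mul, zero_add, add_zero] at h
    rw [Finset.sum_range_succ]
    linear_combination ih + w (M+1) * h - derivative (u (M+1)) * hw M

theorem genA (hu0 : u 0 = 1) (hw0 : w 0 = 0) (hw1 : w 1 = 1)
    (hu : ∀ m, X * u (m+1) = C (A (m+2)) * u (m+2) + C (B (m+1)) * u (m+1) + C (A (m+1)) * u m)
    (hw : ∀ m, X * w (m+1) = C (A (m+2)) * w (m+2) + C (B (m+1)) * w (m+1) + C (A (m+1)) * w m) :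
    ∀ M, ∑ m ∈ range (M+1), u m * w m =
      C (A (M+1)) * (u M * derivative (w (M+1)) - u (M+1) * derivative (w M)) := by
  intro M
  induction M with
  | zero => simp [hu0, hw0, hw1]
  | succ M ih =>
    have h := congrArg derivative (hw M)
    simp only [derivative_add, derivative_mul, derivative_X, derivative_C,
      one_mul, zero_mul, zero_add, add_zero] at h
    rw [Finset.sum_range_succ]
    linear_combination ih + u (M+1) * h - derivative (w (M+1)) * hu M

theorem genStar (hu0 : u 0 = 1) (hw0 : w 0 = 0) (hw1 : w 1 = 1)
    (hu0rec : X * u 0 = C (A 1) * u 1 + C (B 0) * u 0)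
    (hu : ∀ m, X * u (m+1) = C (A (m+2)) * u (m+2) + C (B (m+1)) * u (m+1) + C (A (m+1)) * u m)
    (hw : ∀ m, X * w (m+1) = C (A (m+2)) * w (m+2) + C (B (m+1)) * w (m+1) + C (A (m+1)) * w m) :
    ∀ M, C (A 1) * (derivative (u M) * w M - u M * derivative (w M)) =
      ∑ m ∈ range M, (w M * u m - u M * w m)^2 := by
  intro M
  match M with
  | 0 => simp [hu0, hw0]
  | (M+1) =>
    have hexp : ∑ m ∈ range (M+1), (w (M+1) * u m - u (M+1) * w m)^2 =
        (w (M+1))^2 * ∑ m ∈ range (M+1), (u m)^2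
        - 2 * (u (M+1) * w (M+1)) * ∑ m ∈ range (M+1), (u m * w m)
        + (u (M+1))^2 * ∑ m ∈ range (M+1), (w m)^2 := by
      simp only [Finset.mul_sum, ← Finset.sum_add_distrib, ← Finset.sum_sub_distrib]
      exact Finset.sum_congr rfl fun m _ => by ring
    rw [hexp, genU A B u hu0 hu0rec hu M, genV A B w hw0 hw1 hw M]
    linear_combination (u (M+1) * w (M+1)) * genB A B u w hu0 hw0 hw1 hu hw M
      + (u (M+1) * w (M+1)) * genA A B u w hu0 hw0 hw1 hu hw M
      - (derivative (u (M+1)) * w (M+1) - u (M+1) * derivative (w (M+1))) *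
        genOmega A B u w hu0 hw0 hw1 hu hw M
end Gen2

section Gen3
variable (A B : ℕ → ℝ) (u w : ℕ → Polynomial ℝ)

theorem genDeg (hu0 : u 0 = 1)
    (hu0rec : X * u 0 = C (A 1) * u 1 + C (B 0) * u 0)
    (hu : ∀ m, X * u (m+1) = C (A (m+2)) * u (m+2) + C (B (m+1)) * u (m+1) + C (A (m+1)) * u m)
    (hA : ∀ m, 1 ≤ m → A m ≠ 0) : ∀ m, (u m).degree = m := by
  have key : ∀ m, (u m).degree = m ∧ (u (m+1)).degree = (m+1 : ℕ) := by
    intro m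
    induction m with
    | zero =>
      refine ⟨by rw [hu0]; exact degree_one, ?_⟩
      have h : C (A 1) * u 1 = X - C (B 0) := by
        rw [hu0] at hu0rec; linear_combination -hu0rec
      have h2 : (C (A 1) * u 1).degree = 1 := by rw [h]; exact degree_X_sub_C _
      rwa [degree_C_mul (hA 1 le_rfl)] at h2
    | succ m ih =>
      refine ⟨ih.2, ?_⟩
      have h : C (A (m+2)) * u (m+2) =
          (X * u (m+1) - C (B (m+1)) * u (m+1)) - C (A (m+1)) * u m := by
        linear_combination -(hu m)
      have dX : (X * u (m+1)).degree = ((m+2 : ℕ) : WithBot ℕ) := by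
        rw [degree_mul, degree_X, ih.2]
        norm_cast; omega
      have d1 : (X * u (m+1) - C (B (m+1)) * u (m+1)).degree = ((m+2 : ℕ) : WithBot ℕ) := by
        rw [degree_sub_eq_left_of_degree_lt, dX]
        rw [dX]
        calc (C (B (m+1)) * u (m+1)).degree ≤ (C (B (m+1))).degree + (u (m+1)).degree :=
              degree_mul_le _ _
        _ ≤ 0 + (u (m+1)).degree := add_le_add degree_C_le le_rfl
        _ = ((m+1 : ℕ) : WithBot ℕ) := by rw [zero_add, ih.2]
        _ < ((m+2 : ℕ) : WithBot ℕ) := by exact_mod_cast Nat.lt_succ_self (m+1)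
      have d2 : ((X * u (m+1) - C (B (m+1)) * u (m+1)) - C (A (m+1)) * u m).degree
          = ((m+2 : ℕ) : WithBot ℕ) := by
        rw [degree_sub_eq_left_of_degree_lt, d1]
        rw [d1]
        calc (C (A (m+1)) * u m).degree ≤ (C (A (m+1))).degree + (u m).degree :=
              degree_mul_le _ _
        _ ≤ 0 + (u m).degree := add_le_add degree_C_le le_rfl
        _ = ((m : ℕ) : WithBot ℕ) := by rw [zero_add, ih.1]
        _ < ((m+2 : ℕ) : WithBot ℕ) := by exact_mod_cast by omega
      have h3 := d2
      rw [← h] at h3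
      rwa [degree_C_mul (hA (m+2) (by omega))] at h3
  exact fun m => (key m).1

theorem genDec (a b : ℕ → ℝ) (p : ℕ → Polynomial ℝ) (k : ℕ) (hk : 1 ≤ k)
    (hrec : ∀ m, X * p (m+1) = C (a (m+2)) * p (m+2) + C (b (m+1)) * p (m+1) + C (a (m+1)) * p m)
    (hu0 : u 0 = 1) (hw0 : w 0 = 0) (hw1 : w 1 = 1)
    (hu0rec : X * u 0 = C (a (k+1)) * u 1 + C (b k) * u 0)
    (hu : ∀ m, X * u (m+1) = C (a (k+m+2)) * u (m+2) + C (b (k+m+1)) * u (m+1) + C (a (k+m+1)) * u m)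
    (hw : ∀ m, X * w (m+1) = C (a (k+m+2)) * w (m+2) + C (b (k+m+1)) * w (m+1) + C (a (k+m+1)) * w m)
    (hA : ∀ m, 1 ≤ m → a m ≠ 0) :
    ∀ m, C (a (k+1)) * p (k+m) = C (a (k+1)) * (p k * u m) - C (a k) * (p (k-1) * w m) := by
  obtain ⟨κ, rfl⟩ : ∃ κ, k = κ + 1 := ⟨k-1, by omega⟩
  simp only [Nat.add_sub_cancel]
  rw [hu0, mul_one] at hu0rec
  rw [show κ+1+1 = κ+2 by omega] at hu0rec
  have key : ∀ m, (C (a (κ+2)) * p (κ+1+m) =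
        C (a (κ+2)) * (p (κ+1) * u m) - C (a (κ+1)) * (p κ * w m)) ∧
      (C (a (κ+2)) * p (κ+1+(m+1)) =
        C (a (κ+2)) * (p (κ+1) * u (m+1)) - C (a (κ+1)) * (p κ * w (m+1))) := by
    intro m
    induction m with
    | zero =>
      constructor
      · rw [show κ+1+0 = κ+1 by omega, hu0, hw0]; ring
      · rw [show κ+1+(0+1) = κ+2 by omega, show (0+1 : ℕ) = 1 by omega, hw1]
        linear_combination p (κ+1) * hu0rec - hrec κ
    | succ m ih =>
      refine ⟨ih.2, ?_⟩
      rw [show κ+1+(m+1+1) = κ+1+m+2 by omega]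
      have h1 := ih.1
      have h2 := ih.2
      rw [show κ+1+(m+1) = κ+1+m+1 by omega] at h2
      have hc : (C (a (κ+1+m+2)) : Polynomial ℝ) ≠ 0 := by
        rw [Ne, C_eq_zero]; exact hA _ (by omega)
      apply mul_left_cancel₀ hc
      have hp := hrec (κ+1+m)
      have hum := hu m
      have hwm := hw m
      rw [show m+1+1 = m+2 by omega]
      linear_combination (X - C (b (κ+1+m+1))) * h2 - C (a (κ+1+m+1)) * h1
        - C (a (κ+2)) * hp + C (a (κ+2)) * p (κ+1) * hum - C (a (κ+1)) * p κ * hwm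
  exact fun m => (key m).1
end Gen3

section PF
open Finset

theorem prod_sub_ne_zero (I : Finset ℕ) (Y : ℕ → ℝ) (hinj : Set.InjOn Y I)
    {i : ℕ} (hi : i ∈ I) : (∏ l ∈ I.erase i, (Y i - Y l)) ≠ 0 := by
  rw [Finset.prod_ne_zero_iff]
  intro l hl
  have hlI := Finset.mem_of_mem_erase hl
  have hne : l ≠ i := Finset.ne_of_mem_erase hl
  exact sub_ne_zero.mpr fun h => hne (hinj hlI hi h.symm)

theorem nodal_prod_degree (I : Finset ℕ) (Y : ℕ → ℝ) :
    (∏ i ∈ I, (X - C (Y i))).degree = (I.card : WithBot ℕ) := by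
  rw [degree_prod]
  simp [degree_X_sub_C]

theorem nodal_monic (I : Finset ℕ) (Y : ℕ → ℝ) : (∏ i ∈ I, (X - C (Y i))).Monic :=
  monic_prod_of_monic _ _ fun i _ => monic_X_sub_C (Y i)

theorem fact_of_roots (I : Finset ℕ) (Y : ℕ → ℝ) (hinj : Set.InjOn Y I)
    (D : Polynomial ℝ) (hD : D.degree = (I.card : WithBot ℕ))
    (hroots : ∀ i ∈ I, D.eval (Y i) = 0) :
    D = C D.leadingCoeff * ∏ i ∈ I, (X - C (Y i)) := by
  have hD0 : D ≠ 0 := fun h => by rw [h, degree_zero] at hD; exact absurd hD (by simp)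
  set Q := C D.leadingCoeff * ∏ i ∈ I, (X - C (Y i)) with hQ
  have hlc : D.leadingCoeff ≠ 0 := leadingCoeff_ne_zero.mpr hD0
  have hQdeg : Q.degree = (I.card : WithBot ℕ) := by
    rw [hQ, degree_C_mul hlc, nodal_prod_degree]
  have hQlead : Q.leadingCoeff = D.leadingCoeff := by
    rw [hQ, leadingCoeff_mul, leadingCoeff_C, (nodal_monic I Y).leadingCoeff, mul_one]
  have hsub : (D - Q).degree < (I.card : WithBot ℕ) := by
    rw [← hD]
    exact degree_sub_lt (hD.trans hQdeg.symm) hD0 hQlead.symm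
  by_cases hE : D - Q = 0
  · exact sub_eq_zero.mp hE
  · exfalso
    apply hE
    apply Polynomial.eq_zero_of_natDegree_lt_card_of_eval_eq_zero' _ (I.image Y)
    · rintro r hr
      obtain ⟨i, hi, rfl⟩ := Finset.mem_image.mp hr
      have : Q.eval (Y i) = 0 := by
        rw [hQ]
        simp only [eval_mul, eval_prod, eval_sub, eval_X, eval_C]
        exact mul_eq_zero_of_right _ (Finset.prod_eq_zero hi (sub_self _))
      simp [eval_sub, hroots i hi, this]
    · rw [Finset.card_image_of_injOn hinj]
      exact (natDegree_lt_iff_degree_lt hE).mpr hsub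

theorem lagrange_eval (I : Finset ℕ) (Y : ℕ → ℝ) (hinj : Set.InjOn Y I)
    (g : Polynomial ℝ) (hg : g.degree < (I.card : WithBot ℕ)) :
    g = ∑ i ∈ I, C (g.eval (Y i) / ∏ l ∈ I.erase i, (Y i - Y l)) *
      ∏ l ∈ I.erase i, (X - C (Y l)) := by
  rcases I.eq_empty_or_nonempty with hI | hI
  · subst hI
    simp only [Finset.card_empty, Nat.cast_zero, Finset.sum_empty]
    exact degree_eq_bot.mp (Nat.WithBot.lt_zero_iff.mp hg)
  have hcard : 1 ≤ I.card := Finset.Nonempty.card_pos hI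
  set S := ∑ i ∈ I, C (g.eval (Y i) / ∏ l ∈ I.erase i, (Y i - Y l)) *
      ∏ l ∈ I.erase i, (X - C (Y l)) with hS
  have hE : g - S = 0 := by
    apply Polynomial.eq_zero_of_natDegree_lt_card_of_eval_eq_zero' _ (I.image Y)
    · rintro r hr
      obtain ⟨i0, hi0, rfl⟩ := Finset.mem_image.mp hr
      have hSeval : S.eval (Y i0) = g.eval (Y i0) := by
        rw [hS, eval_finset_sum]
        rw [Finset.sum_eq_single_of_mem i0 hi0]
        · simp only [eval_mul, eval_C, eval_prod, eval_sub, eval_X]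
          exact div_mul_cancel₀ _ (prod_sub_ne_zero I Y hinj hi0)
        · intro i hi hne
          simp only [eval_mul, eval_C, eval_prod, eval_sub, eval_X]
          refine mul_eq_zero_of_right _ (Finset.prod_eq_zero
            (Finset.mem_erase.mpr ⟨hne.symm, hi0⟩) (sub_self _))
      simp [hSeval]
    · rw [Finset.card_image_of_injOn hinj]
      have hg' : g.natDegree < I.card := by
        by_cases hg0 : g = 0
        · simpa [hg0] using hcard
        · exact (natDegree_lt_iff_degree_lt hg0).mpr hg
      have hSdeg : S.natDegree ≤ I.card - 1 := by
        rw [hS]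
        apply Polynomial.natDegree_sum_le_of_forall_le
        intro i hi
        refine le_trans (natDegree_C_mul_le _ _) ?_
        refine le_trans (natDegree_prod_le _ _) ?_
        have : ∀ l ∈ I.erase i, (X - C (Y l)).natDegree = 1 := fun l _ => natDegree_X_sub_C _
        rw [Finset.sum_congr rfl this, Finset.sum_const, smul_eq_mul, mul_one,
          Finset.card_erase_of_mem hi]
      have := natDegree_sub_le g S
      have h2 : (g - S).natDegree ≤ max g.natDegree S.natDegree := this
      omega
  exact sub_eq_zero.mp hE

theorem deriv_at_node (I : Finset ℕ) (Y : ℕ → ℝ) (hinj : Set.InjOn Y I)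
    (D : Polynomial ℝ) (hD : D.degree = (I.card : WithBot ℕ))
    (hroots : ∀ i ∈ I, D.eval (Y i) = 0) {i : ℕ} (hi : i ∈ I) :
    (derivative D).eval (Y i) = D.leadingCoeff * ∏ l ∈ I.erase i, (Y i - Y l) := by
  have hfac := fact_of_roots I Y hinj D hD hroots
  rw [show (∏ i ∈ I, (X - C (Y i))) = Lagrange.nodal I Y from (Lagrange.nodal_eq I Y).symm]
    at hfac
  conv_lhs => rw [hfac]
  rw [derivative_C_mul, eval_mul, eval_C,
    Lagrange.eval_nodal_derivative_eval_node_eq hi, Lagrange.eval_nodal]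

theorem pfSum (I : Finset ℕ) (Y : ℕ → ℝ) (hinj : Set.InjOn Y I)
    (D g : Polynomial ℝ) (hD : D.degree = (I.card : WithBot ℕ))
    (hg : g.degree < (I.card : WithBot ℕ))
    (hroots : ∀ i ∈ I, D.eval (Y i) = 0)
    (lam : ℕ → ℝ) (hlam : ∀ i ∈ I, lam i * (derivative D).eval (Y i) = g.eval (Y i))
    (t : ℝ) (ht : D.eval t ≠ 0) :
    ∑ i ∈ I, lam i * (t - Y i)⁻¹ = g.eval t * (D.eval t)⁻¹ := by
  have hD0 : D ≠ 0 := fun h => by rw [h, degree_zero] at hD; exact absurd hD (by simp)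
  have hlc : D.leadingCoeff ≠ 0 := leadingCoeff_ne_zero.mpr hD0
  have hfac := fact_of_roots I Y hinj D hD hroots
  have hDt : D.eval t = D.leadingCoeff * ∏ l ∈ I, (t - Y l) := by
    conv_lhs => rw [hfac]
    simp [eval_prod]
  have hne : ∀ l ∈ I, t - Y l ≠ 0 := by
    intro l hl h
    exact ht (by rw [sub_eq_zero.mp h]; exact hroots l hl)
  have hgt : g.eval t = ∑ i ∈ I, (g.eval (Y i) / ∏ l ∈ I.erase i, (Y i - Y l)) *
      ∏ l ∈ I.erase i, (t - Y l) := by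
    conv_lhs => rw [lagrange_eval I Y hinj g hg]
    rw [eval_finset_sum]
    exact Finset.sum_congr rfl fun i _ => by simp [eval_prod]
  rw [hgt, Finset.sum_mul]
  refine Finset.sum_congr rfl fun i hi => ?_
  have hLi := prod_sub_ne_zero I Y hinj hi
  have hprodI : ∏ l ∈ I, (t - Y l) = (t - Y i) * ∏ l ∈ I.erase i, (t - Y l) :=
    (Finset.mul_prod_erase I _ hi).symm
  have hEi : ∀ l ∈ I.erase i, t - Y l ≠ 0 := fun l hl => hne l (Finset.mem_of_mem_erase hl)
  have hprodE : ∏ l ∈ I.erase i, (t - Y l) ≠ 0 := Finset.prod_ne_zero_iff.mpr hEi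
  have hlami : lam i = g.eval (Y i) / (D.leadingCoeff * ∏ l ∈ I.erase i, (Y i - Y l)) := by
    have h := hlam i hi
    rw [deriv_at_node I Y hinj D hD hroots hi] at h
    field_simp at h ⊢
    linarith [h]
  rw [hlami, hDt, hprodI]
  have htYi := hne i hi
  field_simp

theorem pfDeriv (I : Finset ℕ) (Y : ℕ → ℝ) (hinj : Set.InjOn Y I)
    (D g : Polynomial ℝ) (hD : D.degree = (I.card : WithBot ℕ))
    (hg : g.degree < (I.card : WithBot ℕ))
    (hroots : ∀ i ∈ I, D.eval (Y i) = 0)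
    (lam : ℕ → ℝ) (hlam : ∀ i ∈ I, lam i * (derivative D).eval (Y i) = g.eval (Y i))
    (t : ℝ) (ht : D.eval t ≠ 0) :
    ∑ i ∈ I, lam i * ((t - Y i)^2)⁻¹ =
      ((derivative D).eval t * g.eval t - (derivative g).eval t * D.eval t) *
        ((D.eval t)^2)⁻¹ := by
  have hne : ∀ l ∈ I, t - Y l ≠ 0 := by
    intro l hl h
    exact ht (by rw [sub_eq_zero.mp h]; exact hroots l hl)
  have h1 : HasDerivAt (fun s => ∑ i ∈ I, lam i * (s - Y i)⁻¹)
      (∑ i ∈ I, lam i * (-1 / ((t - Y i)) ^ 2)) t := by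
    apply HasDerivAt.fun_sum
    intro i hi
    exact (((hasDerivAt_id t).sub_const (Y i)).inv (hne i hi)).const_mul _
  have h2 : HasDerivAt (fun s => g.eval s * (D.eval s)⁻¹)
      ((derivative g).eval t * (D.eval t)⁻¹ +
        g.eval t * (-(derivative D).eval t / (D.eval t) ^ 2)) t :=
    (g.hasDerivAt t).mul ((D.hasDerivAt t).inv ht)
  have hopen : IsOpen {s : ℝ | D.eval s ≠ 0} :=
    isOpen_compl_singleton.preimage (Polynomial.continuous D)
  have heq : (fun s => ∑ i ∈ I, lam i * (s - Y i)⁻¹) =ᶠ[nhds t]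
      (fun s => g.eval s * (D.eval s)⁻¹) := by
    filter_upwards [hopen.mem_nhds ht] with s hs
    exact pfSum I Y hinj D g hD hg hroots lam hlam s hs
  have huniq := h1.unique (h2.congr_of_eventuallyEq heq)
  have h3 : ∑ i ∈ I, lam i * ((t - Y i)^2)⁻¹ =
      -∑ i ∈ I, lam i * (-1 / ((t - Y i)) ^ 2) := by
    rw [← Finset.sum_neg_distrib]
    refine Finset.sum_congr rfl fun i _ => ?_
    field_simp
  rw [h3, huniq]
  field_simp
  ring
end PF

theorem stmt_19
    (μ : Measure ℝ) [IsProbabilityMeasure μ]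
    (lo hi : ℝ)
    (hsupp : μ (Set.Icc lo hi)ᶜ = 0)
    (hinf : ∀ s : Finset ℝ, μ (↑s : Set ℝ)ᶜ ≠ 0)
    (p : ℕ → Polynomial ℝ)
    (hdeg : ∀ m : ℕ, (p m).degree = m)
    (hlead : ∀ m : ℕ, 0 < (p m).leadingCoeff)
    (horth : ∀ m l : ℕ, ∫ t, (p m).eval t * (p l).eval t ∂μ = if m = l then 1 else 0)
    (a b : ℕ → ℝ)
    (hapos : ∀ m : ℕ, 1 ≤ m → 0 < a m)
    (hrec0 : Polynomial.X * p 0 = Polynomial.C (a 1) * p 1 + Polynomial.C (b 0) * p 0)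
    (hrec : ∀ m : ℕ, Polynomial.X * p (m + 1) =
      Polynomial.C (a (m + 2)) * p (m + 2) + Polynomial.C (b (m + 1)) * p (m + 1) +
        Polynomial.C (a (m + 1)) * p m)
    (x : ℕ → ℕ → ℝ)
    (hxroot : ∀ m j : ℕ, 1 ≤ j → j ≤ m → (p m).eval (x m j) = 0)
    (hxmono : ∀ m j : ℕ, 1 ≤ j → j + 1 ≤ m → x m j < x m (j + 1))
    (P : ℕ → ℕ → Polynomial ℝ)
    (hP0 : ∀ k : ℕ, P k 0 = 1)
    (hPrec0 : ∀ k : ℕ, Polynomial.X * P k 0 =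
      Polynomial.C (a (k + 1)) * P k 1 + Polynomial.C (b k) * P k 0)
    (hPrec : ∀ k m : ℕ, Polynomial.X * P k (m + 1) =
      Polynomial.C (a (m + k + 2)) * P k (m + 2) + Polynomial.C (b (m + k + 1)) * P k (m + 1) +
        Polynomial.C (a (m + k + 1)) * P k m)
    (n k : ℕ) (hn : 2 ≤ n) (hk1 : 1 ≤ k) (hk2 : k ≤ n - 1)
    (Y : ℕ → ℝ)
    (hYroot : ∀ i : ℕ, k ≤ i → i ≤ n - 1 → (P k (n - k)).eval (Y i) = 0)
    (hYmono : ∀ i : ℕ, k ≤ i → i + 1 ≤ n - 1 → Y i < Y (i + 1))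
    (lamk : ℕ → ℝ)
    (hlamk : ∀ i : ℕ, k ≤ i → i ≤ n - 1 → lamk i =
      (a n * ((Polynomial.derivative (P k (n - k))).eval (Y i)) *
        ((P k (n - k - 1)).eval (Y i)))⁻¹)
    (j : ℕ) (hj1 : 1 ≤ j) (hj2 : j ≤ n)
    (hpk : (p (k - 1)).eval (x n j) ≠ 0) :
    (P 1 (n - 1)).eval (x n j) ≠ 0 ∧
    a k ^ 2 * ∑ i ∈ Finset.Icc k (n - 1), lamk i / (x n j - Y i) ^ 2 =
      (1 / ((p (k - 1)).eval (x n j)) ^ 2) *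
        (a 1 * ((Polynomial.derivative (p n)).eval (x n j)) / (P 1 (n - 1)).eval (x n j) -
          ∑ i ∈ Finset.range k, ((p i).eval (x n j)) ^ 2) := by
  -- destructure k and n
  obtain ⟨κ, rfl⟩ : ∃ κ, k = κ + 1 := ⟨k - 1, by omega⟩
  obtain ⟨ν, rfl⟩ : ∃ ν, n = κ + 1 + (ν + 1) := ⟨n - κ - 2, by omega⟩
  simp only [show κ + 1 + (ν + 1) = κ + ν + 2 by omega] at *
  simp only [show κ + 1 - 1 = κ by omega, show κ + ν + 2 - 1 = κ + ν + 1 by omega,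
    show κ + ν + 2 - (κ + 1) = ν + 1 by omega,
    show κ + ν + 2 - (κ + 1) - 1 = ν by omega, show ν + 1 - 1 = ν by omega] at hk2 hYroot hYmono hlamk hpk ⊢
  set x₀ : ℝ := x (κ + ν + 2) j with hx₀
  -- p 0 = 1
  have hp0 : p 0 = 1 := by
    have hd0 : (p 0).degree ≤ 0 := le_of_eq (by simpa using hdeg 0)
    obtain ⟨c, hC⟩ : ∃ c, p 0 = C c := ⟨_, Polynomial.eq_C_of_degree_le_zero hd0⟩
    have h00 := horth 0 0
    simp only [if_true, if_pos rfl, hC, eval_C, MeasureTheory.integral_const, measure_univ,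
      ENNReal.toReal_one, probReal_univ, smul_eq_mul, one_mul] at h00
    have hlc := hlead 0
    rw [hC, leadingCoeff_C] at hlc
    have hc1 : c = 1 := by nlinarith
    rw [hC, hc1, map_one]
  -- sequences
  set v : ℕ → Polynomial ℝ := fun m => Nat.casesOn m 0 (fun m' => P 1 m') with hv
  set vk : ℕ → Polynomial ℝ := fun m => Nat.casesOn m 0 (fun m' => P (κ + 2) m') with hvk
  have hv0 : v 0 = 0 := rfl
  have hv1 : v 1 = 1 := hP0 1
  have hvk0 : vk 0 = 0 := rfl
  have hvk1 : vk 1 = 1 := hP0 (κ + 2)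
  have hwp : ∀ m, X * v (m+1) = C (a (m+2)) * v (m+2) + C (b (m+1)) * v (m+1)
      + C (a (m+1)) * v m := by
    intro m
    cases m with
    | zero =>
      show X * P 1 0 = C (a 2) * P 1 1 + C (b 1) * P 1 0 + C (a 1) * 0
      rw [mul_zero, add_zero]
      have h := hPrec0 1
      norm_num at h
      exact h
    | succ m' => exact hPrec 1 m'
  -- general lemmas for the p / P1 pair
  have GOp := genOmega a b p v hp0 hv0 hv1 hrec hwp
  have GUp := genU a b p hp0 hrec0 hrec
  -- recurrences for the order-(κ+1) pair, in (κ+1)+(m) index form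
  have hukG : ∀ m, X * P (κ+1) (m+1) = C (a ((κ+1)+(m+2))) * P (κ+1) (m+2)
      + C (b ((κ+1)+(m+1))) * P (κ+1) (m+1) + C (a ((κ+1)+(m+1))) * P (κ+1) m := by
    intro m
    have h := hPrec (κ+1) m
    rw [show m+(κ+1)+2 = (κ+1)+(m+2) by omega, show m+(κ+1)+1 = (κ+1)+(m+1) by omega] at h
    exact h
  have hwkG : ∀ m, X * vk (m+1) = C (a ((κ+1)+(m+2))) * vk (m+2)
      + C (b ((κ+1)+(m+1))) * vk (m+1) + C (a ((κ+1)+(m+1))) * vk m := by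
    intro m
    cases m with
    | zero =>
      show X * P (κ+2) 0 = C (a ((κ+1)+2)) * P (κ+2) 1 + C (b ((κ+1)+1)) * P (κ+2) 0
        + C (a ((κ+1)+1)) * 0
      rw [mul_zero, add_zero]
      have h := hPrec0 (κ+2)
      rw [show κ+2+1 = (κ+1)+2 by omega] at h
      rw [show (κ+1)+1 = κ+2 by omega]
      exact h
    | succ m' =>
      show X * P (κ+2) (m'+1) = C (a ((κ+1)+(m'+3))) * P (κ+2) (m'+2)
        + C (b ((κ+1)+(m'+2))) * P (κ+2) (m'+1) + C (a ((κ+1)+(m'+2))) * P (κ+2) m'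
      have h := hPrec (κ+2) m'
      rw [show m'+(κ+2)+2 = (κ+1)+(m'+3) by omega, show m'+(κ+2)+1 = (κ+1)+(m'+2) by omega] at h
      exact h
  have huk0G : X * P (κ+1) 0 = C (a ((κ+1)+1)) * P (κ+1) 1 + C (b ((κ+1)+0)) * P (κ+1) 0 := by
    have h := hPrec0 (κ+1)
    rw [show κ+1+1 = (κ+1)+1 by omega]
    exact h
  -- general lemmas for the order-(κ+1) pair
  have GOk := genOmega (fun i => a ((κ+1)+i)) (fun i => b ((κ+1)+i)) (P (κ+1)) vk
    (hP0 (κ+1)) hvk0 hvk1 hukG hwkG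
  have GSk := genStar (fun i => a ((κ+1)+i)) (fun i => b ((κ+1)+i)) (P (κ+1)) vk
    (hP0 (κ+1)) hvk0 hvk1 huk0G hukG hwkG
  have GDegk := genDeg (fun i => a ((κ+1)+i)) (fun i => b ((κ+1)+i)) (P (κ+1))
    (hP0 (κ+1)) huk0G hukG (fun m _ => ne_of_gt (hapos _ (by omega)))
  have GDegk1 : ∀ m, (P (κ+2) m).degree = m := by
    have huk0G' : X * P (κ+2) 0 = C (a ((κ+2)+1)) * P (κ+2) 1 + C (b ((κ+2)+0)) * P (κ+2) 0 := by
      have h := hPrec0 (κ+2)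
      rw [show κ+2+1 = (κ+2)+1 by omega]
      exact h
    have hukG' : ∀ m, X * P (κ+2) (m+1) = C (a ((κ+2)+(m+2))) * P (κ+2) (m+2)
        + C (b ((κ+2)+(m+1))) * P (κ+2) (m+1) + C (a ((κ+2)+(m+1))) * P (κ+2) m := by
      intro m
      have h := hPrec (κ+2) m
      rw [show m+(κ+2)+2 = (κ+2)+(m+2) by omega, show m+(κ+2)+1 = (κ+2)+(m+1) by omega] at h
      exact h
    exact genDeg (fun i => a ((κ+2)+i)) (fun i => b ((κ+2)+i)) (P (κ+2))
      (hP0 (κ+2)) huk0G' hukG' (fun m _ => ne_of_gt (hapos _ (by omega)))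
  -- decomposition
  have hukD : ∀ m, X * P (κ+1) (m+1) = C (a ((κ+1)+m+2)) * P (κ+1) (m+2)
      + C (b ((κ+1)+m+1)) * P (κ+1) (m+1) + C (a ((κ+1)+m+1)) * P (κ+1) m := by
    intro m
    have h := hukG m
    rw [show (κ+1)+(m+2) = (κ+1)+m+2 by omega, show (κ+1)+(m+1) = (κ+1)+m+1 by omega] at h
    exact h
  have hwkD : ∀ m, X * vk (m+1) = C (a ((κ+1)+m+2)) * vk (m+2)
      + C (b ((κ+1)+m+1)) * vk (m+1) + C (a ((κ+1)+m+1)) * vk m := by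
    intro m
    have h := hwkG m
    rw [show (κ+1)+(m+2) = (κ+1)+m+2 by omega, show (κ+1)+(m+1) = (κ+1)+m+1 by omega] at h
    exact h
  have GDec := genDec (P (κ+1)) vk a b p (κ+1) (by omega) hrec (hP0 (κ+1)) hvk0 hvk1
    (hPrec0 (κ+1)) hukD hwkD (fun m hm => ne_of_gt (hapos m hm))
  simp only [Nat.add_sub_cancel] at GDec
  simp only [show κ+1+1 = κ+2 by omega] at GDec
  -- evaluation point
  have hxr : eval x₀ (p (κ+ν+2)) = 0 := hxroot (κ+ν+2) j hj1 hj2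
  have ha1 : 0 < a 1 := hapos 1 le_rfl
  have hak : 0 < a (κ+1) := hapos _ (by omega)
  have haP : 0 < a (κ+2) := hapos _ (by omega)
  have han : 0 < a (κ+ν+2) := hapos _ (by omega)
  -- e1 : Wronskian of p/P1 at x₀
  have e1 : a (κ+ν+2) * (eval x₀ (p (κ+ν+1)) * eval x₀ (P 1 (κ+ν+1))) = a 1 := by
    have h := congrArg (eval x₀) (GOp (κ+ν+1))
    rw [show κ+ν+1+1 = κ+ν+2 by omega] at h
    rw [show v (κ+ν+2) = P 1 (κ+ν+1) from rfl] at h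
    simp only [eval_mul, eval_sub, eval_C, hxr, zero_mul, sub_zero] at h
    linear_combination h
  have hPq : eval x₀ (P 1 (κ+ν+1)) ≠ 0 := by
    intro h0
    rw [h0] at e1
    nlinarith
  have hpn1 : eval x₀ (p (κ+ν+1)) ≠ 0 := by
    intro h0
    rw [h0] at e1
    nlinarith
  -- e2 : confluent CD for p at x₀
  have e2 : ∑ i ∈ Finset.range (κ+ν+2), (eval x₀ (p i))^2 =
      a (κ+ν+2) * (eval x₀ (derivative (p (κ+ν+2))) * eval x₀ (p (κ+ν+1))) := by
    have h := congrArg (eval x₀) (GUp (κ+ν+1))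
    rw [show κ+ν+1+1 = κ+ν+2 by omega] at h
    simp only [eval_finset_sum, eval_pow, eval_mul, eval_sub, eval_C, hxr, mul_zero,
      sub_zero] at h
    linear_combination h
  -- Wronskian for the order-(κ+1) pair as polynomial identity
  have WronK : C (a (κ+ν+2)) * (P (κ+1) ν * P (κ+2) ν - P (κ+1) (ν+1) * vk ν)
      = C (a (κ+2)) := by
    have h := GOk ν
    beta_reduce at h
    rw [show (κ+1)+(ν+1) = κ+ν+2 by omega, show (κ+1)+1 = κ+2 by omega,
      show vk (ν+1) = P (κ+2) ν from rfl] at h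
    exact h
  -- node set
  set I : Finset ℕ := Finset.Icc (κ+1) (κ+ν+1) with hI
  have hIcard : I.card = ν + 1 := by rw [hI, Nat.card_Icc]; omega
  have hIroots : ∀ i ∈ I, eval (Y i) (P (κ+1) (ν+1)) = 0 := by
    intro i hi
    rw [hI, Finset.mem_Icc] at hi
    exact hYroot i hi.1 hi.2
  have hchain : ∀ d i, κ+1 ≤ i → i+d+1 ≤ κ+ν+1 → Y i < Y (i+d+1) := by
    intro d
    induction d with
    | zero => intro i h1 h2; exact hYmono i h1 (by omega)
    | succ d ih =>
      intro i h1 h2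
      have h3 := ih i h1 (by omega)
      have h4 := hYmono (i+d+1) (by omega) (by omega)
      calc Y i < Y (i+d+1) := h3
      _ < Y (i+d+1+1) := h4
  have hinj : Set.InjOn Y I := by
    intro i hi i' hi' heq
    simp only [hI, Finset.coe_Icc, Set.mem_Icc] at hi hi'
    rcases lt_trichotomy i i' with hlt | he | hgt
    · obtain ⟨d, rfl⟩ : ∃ d, i' = i+d+1 := ⟨i'-i-1, by omega⟩
      exact absurd heq (ne_of_lt (hchain d i (by omega) (by omega)))
    · exact he
    · obtain ⟨d, rfl⟩ : ∃ d, i = i'+d+1 := ⟨i-i'-1, by omega⟩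
      exact absurd heq.symm (ne_of_lt (hchain d i' (by omega) (by omega)))
  have hDdeg : (P (κ+1) (ν+1)).degree = (I.card : WithBot ℕ) := by
    rw [hIcard]; exact GDegk (ν+1)
  have hgdeg : (P (κ+2) ν).degree < (I.card : WithBot ℕ) := by
    rw [hIcard, GDegk1 ν]
    exact_mod_cast Nat.lt_succ_self ν
  -- Wronskian evaluated at the nodes
  have evalY : ∀ i ∈ I, a (κ+ν+2) * (eval (Y i) (P (κ+1) ν) * eval (Y i) (P (κ+2) ν))
      = a (κ+2) := by
    intro i hi
    have h := congrArg (eval (Y i)) WronK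
    simp only [eval_mul, eval_sub, eval_C, hIroots i hi, zero_mul, mul_zero, sub_zero] at h
    linear_combination h
  have hD'Y : ∀ i ∈ I, eval (Y i) (derivative (P (κ+1) (ν+1))) ≠ 0 := by
    intro i hi
    rw [deriv_at_node I Y hinj _ hDdeg hIroots hi]
    have hD0 : P (κ+1) (ν+1) ≠ 0 := fun h => by
      rw [h, degree_zero] at hDdeg; exact absurd hDdeg (by simp)
    exact mul_ne_zero (leadingCoeff_ne_zero.mpr hD0) (prod_sub_ne_zero I Y hinj hi)
  have hDtY : ∀ i ∈ I, eval (Y i) (P (κ+1) ν) ≠ 0 := by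
    intro i hi h0
    have h := evalY i hi
    rw [h0] at h
    nlinarith
  have hlamI : ∀ i ∈ I, (a (κ+2) * lamk i) * eval (Y i) (derivative (P (κ+1) (ν+1)))
      = eval (Y i) (P (κ+2) ν) := by
    intro i hi
    have hmem := hi
    rw [hI, Finset.mem_Icc] at hmem
    have hl := hlamk i hmem.1 hmem.2
    have hw := evalY i hi
    rw [hl]
    have h1 := hD'Y i hi
    have h2 := hDtY i hi
    field_simp
    linear_combination -hw
  -- decomposition evaluated at x₀
  have decEval : ∀ m, a (κ+2) * eval x₀ (p (κ+1+m)) =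
      a (κ+2) * (eval x₀ (p (κ+1)) * eval x₀ (P (κ+1) m))
      - a (κ+1) * (eval x₀ (p κ) * eval x₀ (vk m)) := by
    intro m
    have h := congrArg (eval x₀) (GDec m)
    simp only [eval_mul, eval_sub, eval_C] at h
    linear_combination h
  have e4 : a (κ+2) * (eval x₀ (p (κ+1)) * eval x₀ (P (κ+1) (ν+1)))
      = a (κ+1) * (eval x₀ (p κ) * eval x₀ (P (κ+2) ν)) := by
    have h := decEval (ν+1)
    rw [show κ+1+(ν+1) = κ+ν+2 by omega, show vk (ν+1) = P (κ+2) ν from rfl, hxr] at h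
    linear_combination -h
  have hDx : eval x₀ (P (κ+1) (ν+1)) ≠ 0 := by
    intro h0
    have hgx : eval x₀ (P (κ+2) ν) = 0 := by
      rw [h0] at e4
      have := hpk
      have h5 : a (κ+1) * (eval x₀ (p κ) * eval x₀ (P (κ+2) ν)) = 0 := by linarith
      rcases mul_eq_zero.mp h5 with h6 | h6
      · exact absurd h6 (ne_of_gt hak)
      · rcases mul_eq_zero.mp h6 with h7 | h7
        · exact absurd h7 hpk
        · exact h7
    have h := congrArg (eval x₀) WronK
    simp only [eval_mul, eval_sub, eval_C, h0, hgx, zero_mul, mul_zero, sub_zero,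
      zero_sub, neg_zero] at h
    nlinarith
  -- partial fraction derivative identity
  have e6 := pfDeriv I Y hinj (P (κ+1) (ν+1)) (P (κ+2) ν) hDdeg hgdeg hIroots
    (fun i => a (κ+2) * lamk i) hlamI x₀ hDx
  beta_reduce at e6
  have e6' : a (κ+2) * ∑ i ∈ I, lamk i * ((x₀ - Y i)^2)⁻¹ =
      (eval x₀ (derivative (P (κ+1) (ν+1))) * eval x₀ (P (κ+2) ν)
        - eval x₀ (derivative (P (κ+2) ν)) * eval x₀ (P (κ+1) (ν+1))) *
      ((eval x₀ (P (κ+1) (ν+1)))^2)⁻¹ := by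
    rw [Finset.mul_sum, ← e6]
    exact Finset.sum_congr rfl fun i _ => by ring
  have e5 : a (κ+2) * (eval x₀ (derivative (P (κ+1) (ν+1))) * eval x₀ (P (κ+2) ν)
      - eval x₀ (P (κ+1) (ν+1)) * eval x₀ (derivative (P (κ+2) ν))) =
      ∑ m ∈ Finset.range (ν+1),
        (eval x₀ (P (κ+2) ν) * eval x₀ (P (κ+1) m)
          - eval x₀ (P (κ+1) (ν+1)) * eval x₀ (vk m))^2 := by
    have h := congrArg (eval x₀) (GSk (ν+1))
    beta_reduce at h
    rw [show (κ+1)+1 = κ+2 by omega, show vk (ν+1) = P (κ+2) ν from rfl] at h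
    simp only [eval_mul, eval_sub, eval_C, eval_pow, eval_finset_sum] at h
    linear_combination h
  have hterm : ∑ m ∈ Finset.range (ν+1),
      (eval x₀ (P (κ+2) ν) * eval x₀ (P (κ+1) m)
        - eval x₀ (P (κ+1) (ν+1)) * eval x₀ (vk m))^2
      = (a (κ+2) * eval x₀ (P (κ+1) (ν+1)) / (a (κ+1) * eval x₀ (p κ)))^2
        * ∑ m ∈ Finset.range (ν+1), (eval x₀ (p (κ+1+m)))^2 := by
    rw [Finset.mul_sum]
    refine Finset.sum_congr rfl fun m _ => ?_
    have hd := decEval m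
    have hlin : a (κ+1) * eval x₀ (p κ) *
        (eval x₀ (P (κ+2) ν) * eval x₀ (P (κ+1) m)
          - eval x₀ (P (κ+1) (ν+1)) * eval x₀ (vk m))
        = a (κ+2) * eval x₀ (P (κ+1) (ν+1)) * eval x₀ (p (κ+1+m)) := by
      linear_combination (-(eval x₀ (P (κ+1) (ν+1)))) * hd - eval x₀ (P (κ+1) m) * e4
    have hb : a (κ+1) * eval x₀ (p κ) ≠ 0 := mul_ne_zero (ne_of_gt hak) hpk
    have h2 : eval x₀ (P (κ+2) ν) * eval x₀ (P (κ+1) m)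
        - eval x₀ (P (κ+1) (ν+1)) * eval x₀ (vk m)
        = a (κ+2) * eval x₀ (P (κ+1) (ν+1)) * eval x₀ (p (κ+1+m))
          / (a (κ+1) * eval x₀ (p κ)) := by
      field_simp
      linear_combination hlin
    rw [h2, div_pow, div_pow]
    ring
  have e57 := e5.trans hterm
  have hsplit : ∑ i ∈ Finset.range (κ+ν+2), (eval x₀ (p i))^2 =
      ∑ i ∈ Finset.range (κ+1), (eval x₀ (p i))^2
      + ∑ m ∈ Finset.range (ν+1), (eval x₀ (p (κ+1+m)))^2 := by
    have h1 : ∑ i ∈ Finset.Ico 0 (κ+1), (eval x₀ (p i))^2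
        + ∑ i ∈ Finset.Ico (κ+1) (κ+ν+2), (eval x₀ (p i))^2
        = ∑ i ∈ Finset.Ico 0 (κ+ν+2), (eval x₀ (p i))^2 :=
      Finset.sum_Ico_consecutive _ (by omega) (by omega)
    have h2 : ∑ i ∈ Finset.Ico (κ+1) (κ+ν+2), (eval x₀ (p i))^2
        = ∑ m ∈ Finset.range (κ+ν+2-(κ+1)), (eval x₀ (p (κ+1+m)))^2 :=
      Finset.sum_Ico_eq_sum_range _ _ _
    rw [show κ+ν+2-(κ+1) = ν+1 by omega] at h2
    rw [← Finset.range_eq_Ico, ← Finset.range_eq_Ico] at h1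
    rw [← h1, h2]
  refine ⟨hPq, ?_⟩
  simp only [div_eq_mul_inv, one_mul]
  have hR : a 1 * eval x₀ (derivative (p (κ+ν+2))) * (eval x₀ (P 1 (κ+ν+1)))⁻¹
      = ∑ i ∈ Finset.range (κ+ν+2), (eval x₀ (p i))^2 := by
    rw [e2]
    field_simp
    linear_combination (-(eval x₀ (derivative (p (κ+ν+2))))) * e1
  have hL : a (κ+1)^2 * ∑ i ∈ I, lamk i * ((x₀ - Y i)^2)⁻¹
      = (∑ m ∈ Finset.range (ν+1), (eval x₀ (p (κ+1+m)))^2) * ((eval x₀ (p κ))^2)⁻¹ := by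
    have h6 := e6'
    have hb2 : eval x₀ (p κ) ≠ 0 := hpk
    field_simp at h6 e57 ⊢
    apply mul_left_cancel₀
      (mul_ne_zero (pow_ne_zero 2 (ne_of_gt haP)) (pow_ne_zero 2 hDx))
    linear_combination a (κ+2) * e57 + a (κ+1)^2 * eval x₀ (p κ)^2 * a (κ+2) * h6
  rw [hL, hR, hsplit]
  ring
end
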